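/- arXiv:1212.2229 — 5 statements merged into one kernel-verified Lean document; each statement's English description precedes it below -/
import Mathlib

section
/- Let W be a locally compact Hausdorff topological group acting continuously by isometries on a metric space X, such that the action is metrically proper (for every x ∈ X and every r ≥ 0 the set {w ∈ W : d(w·x, x) ≤ r} has compact closure in W) and such that the only element of W acting on X with bounded displacement is the identity (if sup_{x∈X} d(w·x, x) < ∞ then w = 1). Let G be a locally compact Hausdorff topological group and φ : G → W an abstract group homomorphism, and consider the induced action of G on X given by g·x := φ(g)·x. Assume this induced action is cobounded (there exist x₀ ∈ X and R ≥ 0 such that every point of X lies within distance R of the orbit {φ(g)·x₀ : g ∈ G}), metrically proper (for every x ∈ X and r ≥ 0 the set {g ∈ G : d(φ(g)·x, x) ≤ r} has compact closure in G), and locally bounded (for every compact subset Ω ⊆ G and every x ∈ X the set {φ(g)·x : g ∈ Ω} is bounded in X). Then φ is continuous. -/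
open Topology Filter


/-- **Proposition `bbcon`.** Let `W` be a locally compact Hausdorff topological group acting
continuously by isometries on a metric space `X`, metrically properly, and such that the only
element of `W` acting with bounded displacement is the identity. Let `G` be a locally compact
Hausdorff topological group and `φ : G → W` an abstract group homomorphism; assume the induced
action of `G` on `X` is cobounded, metrically proper and locally bounded. Then `φ` is
continuous. -/
theorem continuity_of_homomorphism_bbcon
    {W : Type*} [Group W] [TopologicalSpace W] [IsTopologicalGroup W]
    [LocallyCompactSpace W] [T2Space W]
    {X : Type*} [MetricSpace X] [MulAction W X]
    (hcont : Continuous fun p : W × X => p.1 • p.2)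
    (hisom : ∀ w : W, Isometry fun x : X => w • x)
    (hWproper : ∀ (x : X) (r : ℝ), 0 ≤ r →
      IsCompact (closure {w : W | dist (w • x) x ≤ r}))
    (hnodisp : ∀ w : W, (∃ C : ℝ, ∀ x : X, dist (w • x) x ≤ C) → w = 1)
    {G : Type*} [Group G] [TopologicalSpace G] [IsTopologicalGroup G]
    [LocallyCompactSpace G] [T2Space G]
    (φ : G →* W)
    (hcobounded : ∃ (x₀ : X) (R : ℝ), 0 ≤ R ∧ ∀ x : X, ∃ g : G, dist x (φ g • x₀) ≤ R)
    (hGproper : ∀ (x : X) (r : ℝ), 0 ≤ r →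
      IsCompact (closure {g : G | dist (φ g • x) x ≤ r}))
    (hlocbounded : ∀ (Ω : Set G), IsCompact Ω → ∀ x : X,
      Bornology.IsBounded ((fun g : G => φ g • x) '' Ω)) :
    Continuous φ := by

  classical
  obtain ⟨x₀, R, hR, hcob⟩ := hcobounded
  -- a compact neighbourhood of 1 in G
  obtain ⟨Ω, hΩc, hΩmem⟩ := exists_compact_mem_nhds (1 : G)
  -- bound on displacement of x₀ under φ(Ω)
  obtain ⟨C, hC⟩ : ∃ C : ℝ, ∀ g ∈ Ω, dist (φ g • x₀) x₀ ≤ C := by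
    have hb := hlocbounded Ω hΩc x₀
    rw [Metric.isBounded_iff] at hb
    obtain ⟨C, hC⟩ := hb
    refine ⟨C, fun g hg => ?_⟩
    have h1 : (fun g : G => φ g • x₀) 1 = x₀ := by simp
    have := hC (Set.mem_image_of_mem _ hg)
      (Set.mem_image_of_mem _ (mem_of_mem_nhds hΩmem))
    simpa [h1] using this
  set C' : ℝ := max C 0 with hC'def
  have hC'0 : (0:ℝ) ≤ C' := le_max_right _ _
  set S : Set W := {w : W | dist (w • x₀) x₀ ≤ C'} with hSdef
  have hScont : Continuous fun w : W => dist (w • x₀) x₀ :=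
    (hcont.comp (continuous_id.prodMk continuous_const)).dist continuous_const
  have hSclosed : IsClosed S := isClosed_le hScont continuous_const
  have hSK : IsCompact (closure S) := hWproper x₀ C' hC'0
  set L : Filter W := Filter.map φ (𝓝 1) with hLdef
  have hLne : L.NeBot := Filter.map_neBot
  have hSL : S ∈ L := by
    refine Filter.mem_map.2 (Filter.mem_of_superset hΩmem fun g hg => ?_)
    exact le_trans (hC g hg) (le_max_left _ _)
  have hLS : L ≤ 𝓟 S := Filter.le_principal_iff.mpr hSL
  -- every cluster point of L is the identity
  have key : ∀ w : W, ClusterPt w L → w = 1 := by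
    intro w hw
    apply hnodisp
    have hdisp : ∀ g : G, dist (w • (φ g • x₀)) (φ g • x₀) ≤ C' := by
      intro g
      set c : W → W := fun u => (φ g)⁻¹ * u * φ g with hcdef
      have hcc : ContinuousAt c w := by fun_prop
      have htc : Filter.Tendsto c L L := by
        have h1 : Filter.Tendsto (fun h : G => g * h * g⁻¹) (𝓝 1) (𝓝 1) := by
          have : Continuous fun h : G => g * h * g⁻¹ := by fun_prop
          simpa using this.tendsto (1 : G)
        rw [hLdef, Filter.tendsto_map'_iff]
        have hcomp : (c ∘ φ) = φ ∘ fun h : G => g⁻¹ * h * g := by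
          funext h
          simp [hcdef, Function.comp, map_mul, map_inv, mul_assoc]
        rw [hcomp]
        refine (Filter.tendsto_map.comp ?_)
        have : Continuous fun h : G => g⁻¹ * h * g := by fun_prop
        simpa using this.tendsto (1 : G)
      have hw' : ClusterPt (c w) L := hw.map hcc htc
      have hw'' : c w ∈ S := by
        have : c w ∈ closure S :=
          mem_closure_iff_clusterPt.mpr (hw'.mono hLS)
        rwa [hSclosed.closure_eq] at this
      have heq : dist (w • (φ g • x₀)) (φ g • x₀) = dist (c w • x₀) x₀ := by
        have := (hisom (φ g)⁻¹).dist_eq (w • (φ g • x₀)) (φ g • x₀)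
        rw [← this]
        congr 1
        · simp [hcdef, mul_smul]
        · simp [mul_smul]
      rw [heq]
      exact hw''
    refine ⟨C' + R + R, fun x => ?_⟩
    obtain ⟨g, hg⟩ := hcob x
    calc dist (w • x) x
        ≤ dist (w • x) (w • (φ g • x₀)) + dist (w • (φ g • x₀)) (φ g • x₀)
            + dist (φ g • x₀) x := dist_triangle4 _ _ _ _
      _ ≤ R + C' + R := by
          have h1 : dist (w • x) (w • (φ g • x₀)) = dist x (φ g • x₀) :=
            (hisom w).dist_eq _ _
          have h3 : dist (φ g • x₀) x = dist x (φ g • x₀) := dist_comm _ _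
          rw [h1, h3]
          linarith [hdisp g]
      _ = C' + R + R := by ring
  -- deduce convergence of L to 1
  have hconv : Filter.Tendsto φ (𝓝 1) (𝓝 (1 : W)) := by
    rw [show Filter.Tendsto φ (𝓝 1) (𝓝 (1:W)) ↔ L ≤ 𝓝 (1:W) from Iff.rfl]
    by_contra h
    obtain ⟨U, hU, hUL⟩ : ∃ U ∈ 𝓝 (1 : W), U ∉ L := by
      simpa [Filter.le_def, not_forall] using h
    set V : Set W := interior U with hVdef
    have hV1 : (1 : W) ∈ V := mem_interior_iff_mem_nhds.mpr hU
    have hVL : V ∉ L := fun hmem => hUL (Filter.mem_of_superset hmem interior_subset)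
    have hne : (L ⊓ 𝓟 Vᶜ).NeBot := by
      rw [Filter.inf_principal_neBot_iff]
      intro t ht
      by_contra hemp
      rw [Set.not_nonempty_iff_eq_empty] at hemp
      have : t ⊆ V := by
        intro a ha
        by_contra haV
        exact absurd hemp (Set.nonempty_iff_ne_empty.mp ⟨a, ha, haV⟩)
      exact hVL (Filter.mem_of_superset ht this)
    have hle : L ⊓ 𝓟 Vᶜ ≤ 𝓟 (closure S) :=
      le_trans inf_le_left (le_trans hLS (Filter.principal_mono.mpr subset_closure))
    obtain ⟨w, hwK, hw⟩ := hSK.exists_clusterPt hle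
    have hw1 : w = 1 := key w (hw.mono inf_le_left)
    have hwV : w ∈ closure Vᶜ :=
      mem_closure_iff_clusterPt.mpr (hw.mono inf_le_right)
    rw [(isOpen_interior.isClosed_compl).closure_eq] at hwV
    exact hwV (hw1 ▸ hV1)
  exact continuous_of_continuousAt_one φ (by simpa [ContinuousAt] using hconv)
end

section
/- Let G be a group and let ρ be a (μ,α)-ULSL quasi-action of G on a metric space X. Then there exist a metric space Y, an action of G on Y by (surjective) isometries, and a quasi-isometry j : Y → X that is quasi-equivariant: sup_{g∈G, y∈Y} d(j(g·y), ρ(g)(j(y))) < ∞. -/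
/-- A map `f` between metric spaces is `(μ,α)`-Lipschitz (large-scale Lipschitz). -/
def IsLSLipschitzWith {X Y : Type*} [MetricSpace X] [MetricSpace Y]
    (μ α : ℝ) (f : X → Y) : Prop :=
  ∀ x₁ x₂ : X, dist (f x₁) (f x₂) ≤ μ * dist x₁ x₂ + α

/-- A map `f` between metric spaces is a `(μ,α)`-quasi-isometry. -/
def IsQuasiIsometryWith {X Y : Type*} [MetricSpace X] [MetricSpace Y]
    (μ α : ℝ) (f : X → Y) : Prop :=
  (∀ x₁ x₂ : X, (1 / μ) * dist x₁ x₂ - α ≤ dist (f x₁) (f x₂)) ∧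
    IsLSLipschitzWith μ α f ∧ ∀ y : Y, ∃ x : X, dist y (f x) ≤ α

/-- A `(μ,α)`-ULSL (uniformly large-scale Lipschitz) quasi-action of a group `G` on a
metric space `X`. -/
def IsULSLQuasiAction {G : Type*} [Group G] {X : Type*} [MetricSpace X]
    (μ α : ℝ) (ρ : G → X → X) : Prop :=
  (∀ g : G, IsLSLipschitzWith μ α (ρ g)) ∧
    (∀ x : X, dist (ρ 1 x) x ≤ α) ∧
    ∀ g h : G, ∀ x : X, dist (ρ (g * h) x) (ρ g (ρ h x)) ≤ α

section QAHelpers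

variable {G : Type*} [Group G] {X : Type*} [MetricSpace X]

/-- The sup part of the conjugating distance. -/
noncomputable def qaS (ρ : G → X → X) (p q : G × X) : ℝ :=
  ⨆ k : G, dist (ρ (k * p.1) p.2) (ρ (k * q.1) q.2)

open Classical in
/-- The conjugating distance: sup part plus a discrete part. -/
noncomputable def qaD (ρ : G → X → X) (p q : G × X) : ℝ :=
  qaS ρ p q + (if p = q then 0 else 1)

variable {μ α : ℝ} {ρ : G → X → X}

lemma qa_bdd (hρ : IsULSLQuasiAction μ α ρ) (p q : G × X) (k : G) :
    dist (ρ (k * p.1) p.2) (ρ (k * q.1) q.2)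
      ≤ μ * dist (ρ p.1 p.2) (ρ q.1 q.2) + 3 * α := by
  obtain ⟨hlip, _, hcoc⟩ := hρ
  have h1 : dist (ρ (k * p.1) p.2) (ρ k (ρ p.1 p.2)) ≤ α := hcoc k p.1 p.2
  have h2 : dist (ρ k (ρ p.1 p.2)) (ρ k (ρ q.1 q.2))
      ≤ μ * dist (ρ p.1 p.2) (ρ q.1 q.2) + α := hlip k _ _
  have h3 : dist (ρ k (ρ q.1 q.2)) (ρ (k * q.1) q.2) ≤ α := by
    rw [dist_comm]; exact hcoc k q.1 q.2
  have h4 := dist_triangle4 (ρ (k * p.1) p.2) (ρ k (ρ p.1 p.2))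
      (ρ k (ρ q.1 q.2)) (ρ (k * q.1) q.2)
  linarith

lemma qa_bddAbove (hρ : IsULSLQuasiAction μ α ρ) (p q : G × X) :
    BddAbove (Set.range fun k : G => dist (ρ (k * p.1) p.2) (ρ (k * q.1) q.2)) :=
  ⟨μ * dist (ρ p.1 p.2) (ρ q.1 q.2) + 3 * α, by
    rintro _ ⟨k, rfl⟩; exact qa_bdd hρ p q k⟩

lemma qa_dist_le_S (hρ : IsULSLQuasiAction μ α ρ) (p q : G × X) :
    dist (ρ p.1 p.2) (ρ q.1 q.2) ≤ qaS ρ p q := by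
  have := le_ciSup (qa_bddAbove hρ p q) 1
  simpa [qaS] using this

lemma qaS_nonneg (hρ : IsULSLQuasiAction μ α ρ) (p q : G × X) : 0 ≤ qaS ρ p q :=
  dist_nonneg.trans (qa_dist_le_S hρ p q)

lemma qaS_le (hρ : IsULSLQuasiAction μ α ρ) (p q : G × X) :
    qaS ρ p q ≤ μ * dist (ρ p.1 p.2) (ρ q.1 q.2) + 3 * α :=
  ciSup_le (qa_bdd hρ p q)

lemma qaS_self (p : G × X) : qaS ρ p p = 0 := by
  simp [qaS]

lemma qaS_comm (p q : G × X) : qaS ρ p q = qaS ρ q p := by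
  unfold qaS
  congr 1; funext k; exact dist_comm _ _

lemma qaS_triangle (hρ : IsULSLQuasiAction μ α ρ) (p q r : G × X) :
    qaS ρ p r ≤ qaS ρ p q + qaS ρ q r :=
  ciSup_le fun k =>
    (dist_triangle _ (ρ (k * q.1) q.2) _).trans
      (add_le_add (le_ciSup (qa_bddAbove hρ p q) k) (le_ciSup (qa_bddAbove hρ q r) k))

lemma qaD_nonneg (hρ : IsULSLQuasiAction μ α ρ) (p q : G × X) : 0 ≤ qaD ρ p q := by
  have := qaS_nonneg hρ p q
  classical
  unfold qaD; split_ifs <;> linarith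

/-- The conjugating metric on `G × X`. -/
noncomputable def qaMetric (hρ : IsULSLQuasiAction μ α ρ) : MetricSpace (G × X) where
  dist := qaD ρ
  dist_self p := by
    show qaD ρ p p = 0
    simp [qaD, qaS_self]
  dist_comm p q := by
    show qaD ρ p q = qaD ρ q p
    unfold qaD
    rw [qaS_comm]
    congr 1
    by_cases h : p = q
    · simp [h]
    · rw [if_neg h, if_neg (fun e => h e.symm)]
  dist_triangle p q r := by
    classical
    have hS := qaS_triangle hρ p q r
    show qaD ρ p r ≤ qaD ρ p q + qaD ρ q r
    have hi : (if p = r then (0:ℝ) else 1)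
        ≤ (if p = q then 0 else 1) + (if q = r then 0 else 1) := by
      split_ifs <;> simp_all <;> norm_num
    unfold qaD
    linarith
  eq_of_dist_eq_zero := by
    classical
    intro p q h
    replace h : qaD ρ p q = 0 := h
    by_contra hne
    have hS := qaS_nonneg hρ p q
    unfold qaD at h
    split_ifs at h with hc
    · exact hne hc
    · linarith

lemma qaS_mulLeft (g : G) (p q : G × X) :
    qaS ρ (g * p.1, p.2) (g * q.1, q.2) = qaS ρ p q := by
  unfold qaS
  have : (fun k : G => dist (ρ (k * (g * p.1)) p.2) (ρ (k * (g * q.1)) q.2))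
      = (fun k : G => dist (ρ (k * p.1) p.2) (ρ (k * q.1) q.2)) ∘ (fun k => k * g) := by
    funext k; simp [mul_assoc]
  rw [iSup, iSup, this]
  congr 1
  exact Function.Surjective.range_comp (fun k => ⟨k * g⁻¹, by simp⟩) _

end QAHelpers

universe u v

/-- **Lemma `qadico`(b).** Any ULSL quasi-action of a group `G` on a metric space `X` is
quasi-isometrically quasi-conjugate to a genuine isometric action: there are a metric space
`Y`, an action of `G` on `Y` by surjective isometries, and a quasi-equivariant quasi-isometry
`j : Y → X`. -/
theorem isometric_action_of_ulsl_quasiAction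
    {G : Type u} [Group G] {X : Type v} [MetricSpace X]
    (μ α : ℝ) (hμ : 1 ≤ μ) (hα : 0 ≤ α)
    (ρ : G → X → X) (hρ : IsULSLQuasiAction μ α ρ) :
    ∃ (Y : Type (max u v)) (_ : MetricSpace Y) (act : G →* (Y ≃ᵢ Y)) (j : Y → X),
      (∃ μ' α' : ℝ, 1 ≤ μ' ∧ 0 ≤ α' ∧ IsQuasiIsometryWith μ' α' j) ∧
      ∃ C : ℝ, ∀ (g : G) (y : Y), dist (j (act g y)) (ρ g (j y)) ≤ C := by

  classical
  haveI hμ0 : (0:ℝ) < μ := lt_of_lt_of_le one_pos hμ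
  letI m : MetricSpace (G × X) := qaMetric hρ
  have hdist : ∀ p q : G × X, dist p q = qaD ρ p q := fun _ _ => rfl
  -- the isometric action
  let e : G → (G × X) ≃ᵢ (G × X) := fun g =>
    { toEquiv := (Equiv.mulLeft g).prodCongr (Equiv.refl X)
      isometry_toFun := Isometry.of_dist_eq (by
        intro p q
        show qaD ρ (g * p.1, p.2) (g * q.1, q.2) = qaD ρ p q
        unfold qaD
        rw [qaS_mulLeft]
        congr 1
        have : (g * p.1, p.2) = (g * q.1, q.2) ↔ p = q := by
          constructor
          · intro h
            have h1 := congrArg Prod.fst h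
            have h2 := congrArg Prod.snd h
            simp only at h1 h2
            exact Prod.ext (mul_left_cancel h1) h2
          · rintro rfl; rfl
        simp [this]) }
  have he : ∀ g (p : G × X), e g p = (g * p.1, p.2) := fun g p => rfl
  let act : G →* ((G × X) ≃ᵢ (G × X)) := MonoidHom.mk' e (by
    intro g h
    apply IsometryEquiv.ext
    intro p
    show (g * h * p.1, p.2) = (g * (h * p.1), p.2)
    rw [mul_assoc])
  let j : G × X → X := fun p => ρ p.1 p.2
  refine ⟨G × X, m, act, j, ⟨μ, 3 * α + 1, hμ, by linarith, ?_, ?_, ?_⟩, ⟨α, ?_⟩⟩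
  · -- lower bound
    intro p q
    have h1 : qaD ρ p q ≤ μ * dist (j p) (j q) + (3 * α + 1) := by
      have hS := qaS_le hρ p q
      unfold qaD
      split_ifs <;> simp_all [j] <;> linarith
    have h2 : (1 / μ) * dist p q ≤ dist (j p) (j q) + (3 * α + 1) := by
      rw [hdist, one_div, inv_mul_le_iff₀ hμ0]
      calc qaD ρ p q ≤ μ * dist (j p) (j q) + (3 * α + 1) := h1
        _ ≤ μ * dist (j p) (j q) + μ * (3 * α + 1) := by nlinarith
        _ = μ * (dist (j p) (j q) + (3 * α + 1)) := by ring
    linarith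
  · -- upper bound
    intro p q
    have h1 : dist (j p) (j q) ≤ qaD ρ p q := by
      have := qa_dist_le_S hρ p q
      unfold qaD
      split_ifs <;> simp_all [j] <;> linarith
    have h2 : 0 ≤ qaD ρ p q := qaD_nonneg hρ p q
    rw [hdist]
    nlinarith
  · -- coboundedness
    intro x
    refine ⟨(1, x), ?_⟩
    have := hρ.2.1 x
    calc dist x (j (1, x)) = dist (ρ 1 x) x := dist_comm _ _
      _ ≤ α := this
      _ ≤ 3 * α + 1 := by linarith
  · -- quasi-equivariance
    intro g p
    have : act g p = (g * p.1, p.2) := rfl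
    rw [this]
    exact hρ.2.2 g p.1 p.2
end

section
/- Let T be a tree whose vertex set is unbounded in the graph metric, and suppose the automorphism group Aut(T) has only finitely many orbits on the vertex set. Let S be the set of all vertices of T that lie on some bi-infinite geodesic. Then: (i) S is nonempty; (ii) the induced subgraph on S is connected, so S is a subtree; (iii) S is cobounded in T; (iv) S is contained in every cobounded subtree of T (so S is the unique minimal cobounded subtree of T); and (v) S is the whole vertex set of T if and only if T has no vertex of degree 1. -/
open SimpleGraph

variable {V : Type*}

section Helpers

variable {T : SimpleGraph V}

attribute [local instance] Classical.propDecidable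
attribute [local instance] Classical.decEq

lemma three_sorted {P : ℕ → Prop} {x y z : ℕ} (hx : P x) (hy : P y) (hz : P z)
    (hxy : x ≠ y) (hxz : x ≠ z) (hyz : y ≠ z) :
    ∃ k l m, k < l ∧ l < m ∧ P k ∧ P l ∧ P m := by
  rcases lt_trichotomy x y with h1 | h1 | h1
  · rcases lt_trichotomy y z with h2 | h2 | h2
    · exact ⟨x, y, z, h1, h2, hx, hy, hz⟩
    · exact absurd h2 hyz
    · rcases lt_trichotomy x z with h3 | h3 | h3
      · exact ⟨x, z, y, h3, h2, hx, hz, hy⟩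
      · exact absurd h3 hxz
      · exact ⟨z, x, y, h3, h1, hz, hx, hy⟩
  · exact absurd h1 hxy
  · rcases lt_trichotomy x z with h3 | h3 | h3
    · exact ⟨y, x, z, h1, h3, hy, hx, hz⟩
    · exact absurd h3 hxz
    · rcases lt_trichotomy y z with h2 | h2 | h2
      · exact ⟨y, z, x, h2, h3, hy, hz, hx⟩
      · exact absurd h2 hyz
      · exact ⟨z, y, x, h2, h1, hz, hy, hx⟩

lemma path_length_eq_dist (htree : T.IsTree) {u v : V} (p : T.Walk u v) (hp : p.IsPath) :
    p.length = T.dist u v := by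
  obtain ⟨w, hw⟩ := (htree.isConnected u v).exists_walk_length_eq_dist
  have h1 : w.bypass = p := ((htree.existsUnique_path u v).unique w.bypass_isPath hp)
  have := w.length_bypass_le
  rw [h1] at this
  exact le_antisymm (hw ▸ this) (hw ▸ T.dist_le p)

lemma path_support_subset_walk (htree : T.IsTree) {u v : V} (p q : T.Walk u v)
    (hp : p.IsPath) : p.support ⊆ q.support := by
  have h1 : q.bypass = p := ((htree.existsUnique_path u v).unique q.bypass_isPath hp)
  exact h1 ▸ q.support_bypass_subset

lemma walk_support_eq {u v : V} (p : T.Walk u v) :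
    p.support = (List.range (p.length + 1)).map p.getVert := by
  induction p with
  | nil => simp [List.range_succ]
  | cons h q ih =>
    rw [Walk.support_cons, ih, Walk.length_cons]
    conv_rhs => rw [List.range_succ_eq_map, List.map_cons, List.map_map]
    simp [Function.comp_def, Walk.getVert_cons_succ]

lemma dist_split (htree : T.IsTree) {x y : V} (p : T.Walk x y) (hp : p.IsPath) {a : V}
    (ha : a ∈ p.support) : T.dist x a + T.dist a y = T.dist x y := by
  have h1 := p.take_spec ha
  have h2 : p.length = (p.takeUntil a ha).length + (p.dropUntil a ha).length := by
    rw [← Walk.length_append, h1]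
  rw [← path_length_eq_dist htree p hp,
    ← path_length_eq_dist htree _ (hp.takeUntil ha),
    ← path_length_eq_dist htree _ (hp.dropUntil ha), h2]

lemma nb_fin (htree : T.IsTree) (n : ℕ) : ∀ (c : ℕ → V),
    (∀ k, k < n → T.Adj (c k) (c (k+1))) → (∀ k, 0 < k → k < n → c (k+1) ≠ c (k-1)) →
    ∃ p : T.Walk (c 0) (c n), p.IsPath ∧ p.length = n ∧
      p.support = (List.range (n+1)).map c ∧
      p.edges = (List.range n).map (fun j => s(c j, c (j+1))) := by
  induction n using Nat.strong_induction_on with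
  | _ n IH =>
  match n with
  | 0 =>
    intro c _ _
    exact ⟨Walk.nil, by simp, by simp, by simp [List.range_succ], by simp⟩
  | (n+1) =>
    intro c hadj hnb
    obtain ⟨p, hp, hlen, hsupp, hedge⟩ :=
      IH n (by omega) c (fun k hk => hadj k (by omega)) (fun k h1 h2 => hnb k h1 (by omega))
    have hmem : c (n+1) ∉ p.support := by
      rw [hsupp]
      intro hm
      simp only [List.mem_map, List.mem_range] at hm
      obtain ⟨k, hk, hck⟩ := hm
      rcases Nat.lt_or_ge k n with hkn | hkn
      · rcases Nat.lt_or_ge k (n-1) with hkn1 | hkn1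
        · -- k ≤ n - 2 : build a cycle
          obtain ⟨P, hP, _, hPsupp, hPedge⟩ :=
            IH (n - k) (by omega) (fun j => c (k+1+j))
              (fun j hj => hadj (k+1+j) (by omega))
              (fun j hj1 hj2 => by
                have h := hnb (k+1+j) (by omega) (by omega)
                show c (k+1+(j+1)) ≠ c (k+1+(j-1))
                have e2 : k+1+(j-1) = (k+1+j)-1 := by omega
                rw [e2]
                exact h)
          have e3 : k+1+(n-k) = n+1 := by omega
          have hend : c (k+1+(n-k)) = c k := by rw [e3, ← hck]
          set P' : T.Walk (c (k+1)) (c k) := P.copy rfl hend with hP'def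
          have hcyc : (Walk.cons (hadj k (by omega)) P').IsCycle := by
            rw [Walk.cons_isCycle_iff]
            constructor
            · simpa [hP'def] using hP
            · rw [hP'def, Walk.edges_copy, hPedge]
              intro hmem2
              simp only [List.mem_map, List.mem_range] at hmem2
              obtain ⟨j, hj, hjeq⟩ := hmem2
              have hinj : ∀ a b, a < n-k+1 → b < n-k+1 → c (k+1+a) = c (k+1+b) → a = b := by
                have hnd : ((List.range (n-k+1)).map (fun j => c (k+1+j))).Nodup := by
                  rw [← hPsupp]; exact hP.support_nodup
                intro a b ha hb hab
                exact List.inj_on_of_nodup_map hnd (by simp [List.mem_range, ha])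
                  (by simp [List.mem_range, hb]) hab
              rw [Sym2.eq_iff] at hjeq
              rcases hjeq with ⟨hA, hB⟩ | ⟨hA, hB⟩
              · have := hinj (j+1) 0 (by omega) (by omega) (by simpa using hB)
                omega
              · have := hinj j 0 (by omega) (by omega) (by simpa using hA)
                subst this
                exact hnb (k+1) (by omega) (by omega) (by simpa using hB)
          exact htree.2 _ hcyc
        · exact hnb n (by omega) (by omega)
            (by rw [show n - 1 = k from by omega, ← hck])
      · have : k = n := by omega
        subst this
        exact (hadj k (by omega)).ne hck
    refine ⟨p.concat (hadj n (by omega)), ?_, ?_, ?_, ?_⟩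
    · rw [Walk.isPath_def, Walk.support_concat, List.nodup_append]
      refine ⟨hp.support_nodup, List.nodup_singleton _, ?_⟩
      intro a ha b hb hab
      simp only [List.mem_singleton] at hb
      subst hb
      exact hmem (hab ▸ ha)
    · simp [Walk.length_concat, hlen]
    · rw [Walk.support_concat, hsupp]
      rw [List.range_succ (n := n+1), List.map_append]
      simp
    · rw [Walk.edges_concat, hedge, List.concat_eq_append]
      rw [List.range_succ (n := n), List.map_append]
      simp

lemma nb_fin_dist (htree : T.IsTree) (c : ℕ → V) (n : ℕ)
    (hadj : ∀ k, k < n → T.Adj (c k) (c (k+1)))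
    (hnb : ∀ k, 0 < k → k < n → c (k+1) ≠ c (k-1)) :
    T.dist (c 0) (c n) = n := by
  obtain ⟨p, hp, hlen, -, -⟩ := nb_fin htree n c hadj hnb
  rw [← path_length_eq_dist htree p hp, hlen]

lemma nb_geodesic (htree : T.IsTree) (δ : ℤ → V)
    (hadj : ∀ k : ℤ, T.Adj (δ k) (δ (k+1)))
    (hnb : ∀ k : ℤ, δ (k+1) ≠ δ (k-1)) :
    ∀ m n : ℤ, T.dist (δ m) (δ n) = (m - n).natAbs := by
  have key : ∀ (d : ℕ) (m : ℤ), T.dist (δ m) (δ (m + d)) = d := by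
    intro d m
    have h0 : (fun k : ℕ => δ (m + k)) 0 = δ m := by norm_num
    have := nb_fin_dist htree (fun k : ℕ => δ (m + k)) d
      (fun k hk => by
        have h := hadj (m + k)
        have e : m + ((k : ℤ) + 1) = m + k + 1 := by ring
        simpa [e] using h)
      (fun k hk1 hk2 => by
        intro hEq
        apply hnb (m + k)
        have e1 : m + (k:ℤ) + 1 = m + (((k:ℕ)+1 : ℕ) : ℤ) := by push_cast; ring
        have e2 : m + (k:ℤ) - 1 = m + (((k:ℕ)-1 : ℕ) : ℤ) := by omega
        rw [e1, e2]
        exact hEq)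
    simpa using this
  intro m n
  rcases le_total n m with h | h
  · have e : m = n + ((m - n).toNat : ℤ) := by omega
    have := key (m - n).toNat n
    rw [← e] at this
    rw [T.dist_comm, this]
    omega
  · have e : n = m + ((n - m).toNat : ℤ) := by omega
    have := key (n - m).toNat m
    rw [← e] at this
    rw [this]
    omega

lemma iso_dist (hconn : T.Connected) (φ : T ≃g T) (u v : V) :
    T.dist (φ u) (φ v) = T.dist u v := by
  have hle : ∀ (ψ : T ≃g T) (a b : V), T.dist (ψ a) (ψ b) ≤ T.dist a b := by
    intro ψ a b
    obtain ⟨w, hw⟩ := (hconn a b).exists_walk_length_eq_dist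
    have := T.dist_le (w.map ψ.toHom)
    rwa [Walk.length_map, hw] at this
  refine le_antisymm (hle φ u v) ?_
  have := hle φ.symm (φ u) (φ v)
  simpa using this

lemma exists_param (htree : T.IsTree) (u v : V) :
    ∃ c : ℕ → V, c 0 = u ∧ c (T.dist u v) = v ∧
      (∀ k, k < T.dist u v → T.Adj (c k) (c (k+1))) ∧
      (∀ a b, a ≤ T.dist u v → b ≤ T.dist u v → c a = c b → a = b) ∧
      (∀ p : T.Walk u v, p.IsPath → p.support = (List.range (T.dist u v + 1)).map c) := by
  obtain ⟨w, hw⟩ := (htree.isConnected u v).exists_walk_length_eq_dist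
  set p := w.bypass with hpdef
  have hp : p.IsPath := w.bypass_isPath
  have hlen : p.length = T.dist u v := path_length_eq_dist htree p hp
  refine ⟨p.getVert, p.getVert_zero, ?_, ?_, ?_, ?_⟩
  · rw [← hlen]; exact p.getVert_length
  · intro k hk; exact p.adj_getVert_succ (by omega)
  · intro a b ha hb hab
    have hnd : ((List.range (p.length + 1)).map p.getVert).Nodup := by
      rw [← walk_support_eq]; exact hp.support_nodup
    exact List.inj_on_of_nodup_map hnd (by simp; omega) (by simp; omega) hab
  · intro q hq
    have : q = p := ((htree.existsUnique_path u v).unique hq hp)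
    rw [this, walk_support_eq, hlen]

lemma mem_support_of_dist_add (htree : T.IsTree) {x y v : V}
    (h : T.dist x v + T.dist v y = T.dist x y) (p : T.Walk x y) (hp : p.IsPath) :
    v ∈ p.support := by
  obtain ⟨w1, hw1⟩ := (htree.isConnected x v).exists_walk_length_eq_dist
  obtain ⟨w2, hw2⟩ := (htree.isConnected v y).exists_walk_length_eq_dist
  set p1 := w1.bypass with h1def
  set p2 := w2.bypass with h2def
  have hp1 : p1.IsPath := w1.bypass_isPath
  have hp2 : p2.IsPath := w2.bypass_isPath
  have happ : (p1.append p2).IsPath := by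
    rw [Walk.isPath_def, Walk.support_append, List.nodup_append]
    refine ⟨hp1.support_nodup, hp2.support_nodup.tail, ?_⟩
    intro a ha b hb hab
    rw [← hab] at hb
    have hb' : a ∈ p2.support := List.mem_of_mem_tail hb
    have e1 := dist_split htree p1 hp1 ha
    have e2 := dist_split htree p2 hp2 hb'
    have tri := htree.isConnected.dist_triangle (u := x) (v := a) (w := y)
    have hc : T.dist a v = T.dist v a := T.dist_comm
    have hav : T.dist a v = 0 := by omega
    have haeq : a = v := ((htree.isConnected a v).dist_eq_zero_iff).mp hav
    subst haeq
    have hcons := p2.support_eq_cons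
    have := hp2.support_nodup
    rw [hcons] at this
    exact (List.nodup_cons.mp this).1 hb
  have hup : p = p1.append p2 := (htree.existsUnique_path x y).unique hp happ
  rw [hup, Walk.mem_support_append_iff]
  exact Or.inl p1.end_mem_support

lemma sep_lemma (htree : T.IsTree) {x y v x' y' : V}
    (hv : T.dist x v + T.dist v y = T.dist x y)
    (hx : T.dist x x' < T.dist x v) (hy : T.dist y y' < T.dist v y)
    (p : T.Walk x' y') : v ∈ p.support := by
  obtain ⟨w1, hw1⟩ := (htree.isConnected x x').exists_walk_length_eq_dist
  obtain ⟨w2, hw2⟩ := (htree.isConnected y' y).exists_walk_length_eq_dist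
  set p1 := w1.bypass with h1def
  set p2 := w2.bypass with h2def
  have hp1 : p1.IsPath := w1.bypass_isPath
  have hp2 : p2.IsPath := w2.bypass_isPath
  obtain ⟨w0, hw0⟩ := (htree.isConnected x y).exists_walk_length_eq_dist
  have hp0 : w0.bypass.IsPath := w0.bypass_isPath
  have hv0 : v ∈ w0.bypass.support := mem_support_of_dist_add htree hv _ hp0
  have hsub := path_support_subset_walk htree w0.bypass (p1.append (p.append p2)) hp0
  have hvW := hsub hv0
  rw [Walk.mem_support_append_iff, Walk.mem_support_append_iff] at hvW
  rcases hvW with h1 | h2 | h3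
  · have := dist_split htree p1 hp1 h1
    omega
  · exact h2
  · have := dist_split htree p2 hp2 h3
    have hc : T.dist y y' = T.dist y' y := T.dist_comm
    have hc2 : T.dist v y = T.dist y v := T.dist_comm
    have hc3 : T.dist y' v + T.dist v y = T.dist y' y := by omega
    omega

lemma walk_of_induced {S : Set V} {a b : S} (q : (T.induce S).Walk a b) :
    ∃ w : T.Walk a.1 b.1, ∀ x ∈ w.support, x ∈ S := by
  induction q with
  | nil => exact ⟨Walk.nil, by intro x hx; simp at hx; subst hx; exact Subtype.coe_prop _⟩
  | @cons u c d h q ih =>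
    obtain ⟨w, hw⟩ := ih
    refine ⟨Walk.cons h w, ?_⟩
    intro x hx
    change x ∈ (u : V) :: w.support at hx
    rw [List.mem_cons] at hx
    rcases hx with rfl | hx
    · exact Subtype.coe_prop u
    · exact hw x hx

lemma reachable_in_induce {S : Set V} {a b : V} (w : T.Walk a b)
    (h : ∀ x ∈ w.support, x ∈ S) (ha : a ∈ S) (hb : b ∈ S) :
    (T.induce S).Reachable ⟨a, ha⟩ ⟨b, hb⟩ := by
  induction w with
  | nil => rfl
  | @cons a c b hadj q ih =>
    have hc : c ∈ S := h c (by rw [Walk.support_cons]; exact List.mem_cons_of_mem _ q.start_mem_support)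
    have hstep : (T.induce S).Adj ⟨a, ha⟩ ⟨c, hc⟩ := by
      simp only [comap_adj, Function.Embedding.coe_subtype]
      exact hadj
    exact (hstep.reachable).trans (ih (fun x hx => h x (by rw [Walk.support_cons]; exact List.mem_cons_of_mem _ hx)) hc hb)

lemma geo_adj {γ : ℤ → V} (h : ∀ m n : ℤ, T.dist (γ m) (γ n) = (m - n).natAbs)
    (a b : ℤ) (hab : (a - b).natAbs = 1) : T.Adj (γ a) (γ b) :=
  dist_eq_one_iff_adj.mp (by rw [h a b, hab])

lemma geo_inj {γ : ℤ → V} (h : ∀ m n : ℤ, T.dist (γ m) (γ n) = (m - n).natAbs)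
    {a b : ℤ} (hab : γ a = γ b) : a = b := by
  have := h a b
  rw [hab, SimpleGraph.dist_self] at this
  omega

lemma geodesic_through_path (htree : T.IsTree) {u v : V}
    (γ1 γ2 : ℤ → V)
    (h1 : ∀ m n : ℤ, T.dist (γ1 m) (γ1 n) = (m - n).natAbs)
    (h2 : ∀ m n : ℤ, T.dist (γ2 m) (γ2 n) = (m - n).natAbs)
    (h1u : γ1 0 = u) (h2v : γ2 0 = v)
    (c : ℕ → V) (D : ℕ) (hD : 1 ≤ D) (hc0 : c 0 = u) (hcD : c D = v)
    (hadj : ∀ k, k < D → T.Adj (c k) (c (k+1)))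
    (hinj : ∀ a b, a ≤ D → b ≤ D → c a = c b → a = b) :
    ∀ t, t ≤ D → ∃ δ : ℤ → V,
      (∀ m n : ℤ, T.dist (δ m) (δ n) = (m - n).natAbs) ∧ ∃ n : ℤ, δ n = c t := by
  intro t ht
  set ε : ℤ := if γ1 (-1) = c 1 then -1 else 1 with hεdef
  have hεval : ε = 1 ∨ ε = -1 := by rw [hεdef]; by_cases hh : γ1 (-1) = c 1 <;> simp [hh]
  have hε : γ1 (-ε) ≠ c 1 := by
    rw [hεdef]
    by_cases hh : γ1 (-1) = c 1
    · rw [if_pos hh, show (-(-1):ℤ) = 1 from by norm_num]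
      intro hcontra
      have := geo_inj h1 (hcontra.trans hh.symm)
      omega
    · rw [if_neg hh, show (-(1):ℤ) = -1 from by norm_num]
      exact hh
  set ε' : ℤ := if γ2 1 = c (D - 1) then -1 else 1 with hε'def
  have hε'val : ε' = 1 ∨ ε' = -1 := by
    rw [hε'def]; by_cases hh : γ2 1 = c (D - 1) <;> simp [hh]
  have hε' : γ2 ε' ≠ c (D - 1) := by
    rw [hε'def]
    by_cases hh : γ2 1 = c (D - 1)
    · rw [if_pos hh]
      intro hcontra
      have := geo_inj h2 (hcontra.trans hh.symm)
      omega
    · rw [if_neg hh]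
      exact hh
  set δ : ℤ → V := fun s => if s < 0 then γ1 (ε * s)
    else if s ≤ (D:ℤ) then c s.toNat else γ2 (ε' * (s - D)) with hδdef
  have hδneg : ∀ s : ℤ, s < 0 → δ s = γ1 (ε * s) := by
    intro s hs; show (if s < 0 then _ else _) = _; rw [if_pos hs]
  have hδmid : ∀ s : ℤ, 0 ≤ s → s ≤ D → δ s = c s.toNat := by
    intro s hs1 hs2
    show (if s < 0 then _ else _) = _
    rw [if_neg (by omega), if_pos hs2]
  have hδpos : ∀ s : ℤ, (D:ℤ) < s → δ s = γ2 (ε' * (s - D)) := by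
    intro s hs
    show (if s < 0 then _ else _) = _
    rw [if_neg (by omega), if_neg (by omega)]
  have hadjδ : ∀ s : ℤ, T.Adj (δ s) (δ (s+1)) := by
    intro s
    rcases lt_trichotomy s (-1) with hs | hs | hs
    · rw [hδneg s (by omega), hδneg (s+1) (by omega)]
      apply geo_adj h1
      rcases hεval with h | h <;> rw [h] <;> omega
    · subst hs
      rw [hδneg (-1) (by omega), show (-1 : ℤ) + 1 = 0 from by omega,
        hδmid 0 le_rfl (by omega)]
      rw [show ((0:ℤ).toNat) = 0 from rfl, hc0, ← h1u]
      apply geo_adj h1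
      rcases hεval with h | h <;> rw [h] <;> omega
    · rcases lt_trichotomy s (D:ℤ) with hs2 | hs2 | hs2
      · rw [hδmid s (by omega) (by omega), hδmid (s+1) (by omega) (by omega),
          show (s+1).toNat = s.toNat + 1 from by omega]
        exact hadj s.toNat (by omega)
      · subst hs2
        rw [hδmid _ (by omega) le_rfl, hδpos _ (by omega),
          show ((D:ℤ).toNat) = D from by omega, hcD, ← h2v,
          show (ε' * ((D:ℤ) + 1 - (D:ℤ))) = ε' from by ring]
        apply geo_adj h2
        rcases hε'val with h | h <;> rw [h] <;> omega
      · rw [hδpos s (by omega), hδpos (s+1) (by omega)]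
        apply geo_adj h2
        rcases hε'val with h | h <;> rw [h]
        · have : 1 * (s - (D:ℤ)) - 1 * (s + 1 - (D:ℤ)) = -1 := by ring
          omega
        · have : (-1) * (s - (D:ℤ)) - (-1) * (s + 1 - (D:ℤ)) = 1 := by ring
          omega
  have hnbδ : ∀ s : ℤ, δ (s+1) ≠ δ (s-1) := by
    intro s
    rcases lt_trichotomy s (-1) with hs | hs | hs
    · rw [hδneg (s+1) (by omega), hδneg (s-1) (by omega)]
      intro hEq
      have := geo_inj h1 hEq
      rcases hεval with h | h <;> rw [h] at this <;> omega
    · subst hs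
      rw [show (-1:ℤ) + 1 = 0 from by omega, hδmid 0 le_rfl (by omega),
        hδneg _ (by omega), show ((0:ℤ).toNat) = 0 from rfl, hc0, ← h1u]
      intro hEq
      have := geo_inj h1 hEq
      rcases hεval with h | h <;> rw [h] at this <;> omega
    · rcases lt_trichotomy s 0 with hs1 | hs1 | hs1
      · omega
      · subst hs1
        rw [show (0:ℤ) + 1 = 1 from rfl, show (0:ℤ) - 1 = -1 from rfl,
          hδmid 1 (by omega) (by omega), hδneg (-1) (by omega),
          show ((1:ℤ).toNat) = 1 from rfl, show (ε * (-1)) = -ε from by ring]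
        exact fun hEq => hε hEq.symm
      · rcases lt_trichotomy s (D:ℤ) with hs2 | hs2 | hs2
        · rw [hδmid (s+1) (by omega) (by omega), hδmid (s-1) (by omega) (by omega)]
          intro hEq
          have := hinj (s+1).toNat (s-1).toNat (by omega) (by omega) hEq
          omega
        · subst hs2
          rw [hδpos _ (by omega), hδmid _ (by omega) (by omega),
            show (ε' * ((D:ℤ) + 1 - D)) = ε' from by ring,
            show (((D:ℤ) - 1).toNat) = D - 1 from by omega]
          exact hε'
        · rcases lt_trichotomy (s-1) (D:ℤ) with hs3 | hs3 | hs3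
          · omega
          · rw [hδpos (s+1) (by omega), hδmid (s-1) (by omega) (by omega),
              show ((s-1).toNat) = D from by omega, hcD, ← h2v]
            intro hEq
            have := geo_inj h2 hEq
            rcases hε'val with h | h <;> rw [h] at this <;> omega
          · rw [hδpos (s+1) (by omega), hδpos (s-1) (by omega)]
            intro hEq
            have := geo_inj h2 hEq
            rcases hε'val with h | h <;> rw [h] at this
            · have e2 : 1 * (s + 1 - (D:ℤ)) - 1 * (s - 1 - (D:ℤ)) = 2 := by ring
              omega
            · have e2 : (-1) * (s + 1 - (D:ℤ)) - (-1) * (s - 1 - (D:ℤ)) = -2 := by ring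
              omega
  refine ⟨δ, nb_geodesic htree δ hadjδ hnbδ, ⟨(t : ℤ), ?_⟩⟩
  rw [hδmid (t:ℤ) (by omega) (by omega), Int.toNat_natCast]

lemma perm_pow_adj (φ : T ≃g T) (q : ℤ) :
    ∀ x y : V, T.Adj ((φ.toEquiv ^ q) x) ((φ.toEquiv ^ q) y) ↔ T.Adj x y := by
  induction q using Int.induction_on with
  | zero => intro x y; simp
  | succ k ih =>
    intro x y
    rw [zpow_add_one]
    simp only [Equiv.Perm.mul_apply]
    rw [ih]
    exact φ.map_adj_iff
  | pred k ih =>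
    intro x y
    rw [zpow_sub_one]
    simp only [Equiv.Perm.mul_apply]
    rw [ih, Equiv.Perm.inv_def]
    exact φ.symm.map_adj_iff

lemma exists_geodesic_of_translate (htree : T.IsTree) (α : T ≃g T) (c : ℕ → V) (L : ℕ)
    (hL : 1 ≤ L)
    (hadj : ∀ k, k < L + 1 → T.Adj (c k) (c (k+1)))
    (hinj : ∀ a b, a ≤ L + 1 → b ≤ L + 1 → c a = c b → a = b)
    (htr : α (c 0) = c L) (hgood : α (c 1) ≠ c (L - 1)) :
    ∃ δ : ℤ → V, (∀ m n : ℤ, T.dist (δ m) (δ n) = (m - n).natAbs) ∧ δ 0 = c 0 := by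
  set e : Equiv.Perm V := α.toEquiv with hedef
  set LZ : ℤ := (L : ℤ) with hLZdef
  have hLZ : 0 < LZ := by omega
  have he0 : e (c 0) = c L := htr
  have hmodlt : ∀ n : ℤ, 0 ≤ n % LZ ∧ n % LZ < LZ :=
    fun n => ⟨Int.emod_nonneg n (by omega), Int.emod_lt_of_pos n hLZ⟩
  have hdiv : ∀ (n q r : ℤ), n = LZ * q + r → 0 ≤ r → r < LZ → n / LZ = q ∧ n % LZ = r :=
    fun n q r h1 h2 h3 => (Int.ediv_emod_unique hLZ).mpr ⟨by omega, h2, h3⟩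
  set δ : ℤ → V := fun n => (e ^ (n / LZ)) (c (n % LZ).toNat) with hδdef
  have hstep : ∀ n : ℤ, δ (n + 1) = (e ^ (n / LZ)) (c ((n % LZ).toNat + 1)) := by
    intro n
    have h0 := Int.mul_ediv_add_emod n LZ
    obtain ⟨hra, hrb⟩ := hmodlt n
    by_cases hc : n % LZ + 1 < LZ
    · have h1 : (n+1) / LZ = n / LZ ∧ (n+1) % LZ = n % LZ + 1 :=
        hdiv (n+1) (n / LZ) (n % LZ + 1) (by omega) (by omega) hc
      show (e ^ ((n+1)/LZ)) (c ((n+1) % LZ).toNat) = _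
      rw [h1.1, h1.2, show (n % LZ + 1).toNat = (n % LZ).toNat + 1 from by omega]
    · have hrL : n % LZ = LZ - 1 := by omega
      have h1 : (n+1) / LZ = n / LZ + 1 ∧ (n+1) % LZ = 0 :=
        hdiv (n+1) (n / LZ + 1) 0 (by ring_nf; omega) (le_refl 0) hLZ
      show (e ^ ((n+1)/LZ)) (c ((n+1) % LZ).toNat) = _
      rw [h1.1, h1.2, zpow_add_one]
      simp only [Equiv.Perm.mul_apply]
      rw [show ((0:ℤ).toNat) = 0 from rfl, he0,
        show (n % LZ).toNat + 1 = L from by omega]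
  have hadjδ : ∀ n : ℤ, T.Adj (δ n) (δ (n+1)) := by
    intro n
    rw [hstep n]
    show T.Adj ((e^(n/LZ)) (c (n % LZ).toNat)) _
    rw [perm_pow_adj α]
    apply hadj
    obtain ⟨hr1, hr2⟩ := hmodlt n
    omega
  have hnbδ : ∀ n : ℤ, δ (n+1) ≠ δ (n-1) := by
    intro n
    obtain ⟨hra, hrb⟩ := hmodlt n
    have h0 := Int.mul_ediv_add_emod n LZ
    rw [hstep n]
    by_cases hc : 1 ≤ n % LZ
    · have h1 : (n-1)/LZ = n/LZ ∧ (n-1)%LZ = n%LZ - 1 :=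
        hdiv _ _ _ (by omega) (by omega) (by omega)
      show _ ≠ (e ^ ((n-1)/LZ)) (c ((n-1)%LZ).toNat)
      rw [h1.1, h1.2]
      intro hEq
      have hinjq := (e ^ (n/LZ)).injective hEq
      have h2 := hinj ((n%LZ).toNat + 1) ((n%LZ - 1).toNat) (by omega) (by omega) hinjq
      omega
    · have hr0 : n % LZ = 0 := by omega
      have h1 : (n-1)/LZ = n/LZ - 1 ∧ (n-1)%LZ = LZ - 1 :=
        hdiv _ _ _ (by ring_nf; omega) (by omega) (by omega)
      show _ ≠ (e ^ ((n-1)/LZ)) (c ((n-1)%LZ).toNat)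
      rw [h1.1, h1.2, zpow_sub_one]
      simp only [Equiv.Perm.mul_apply]
      intro hEq
      have h2 := (e ^ (n/LZ)).injective hEq
      apply hgood
      rw [hr0] at h2
      rw [show ((0:ℤ).toNat + 1) = 1 from rfl,
        show ((LZ - 1).toNat) = L - 1 from by omega] at h2
      have h3 : e (c 1) = c (L - 1) := by
        rw [h2]
        exact Equiv.apply_symm_apply e _
      exact h3
  refine ⟨δ, nb_geodesic htree δ hadjδ hnbδ, ?_⟩
  show (e ^ ((0:ℤ)/LZ)) (c ((0:ℤ) % LZ).toNat) = c 0
  rw [Int.zero_ediv, Int.zero_emod]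
  simp

lemma geodesic_of_no_leaf (htree : T.IsTree) (hne : ∀ x : V, ∃ w, T.Adj x w)
    (hnl : ¬ ∃ x : V, ∃! w : V, T.Adj x w) (v : V) :
    ∃ δ : ℤ → V, (∀ m n : ℤ, T.dist (δ m) (δ n) = (m - n).natAbs) ∧ δ 0 = v := by
  have htwo : ∀ x w : V, T.Adj x w → ∃ w', T.Adj x w' ∧ w' ≠ w := by
    intro x w hxw
    by_contra hno
    push_neg at hno
    exact hnl ⟨x, w, hxw, fun y hy => hno y hy⟩
  have htwo' : ∀ x w : V, ∃ w', T.Adj x w → (T.Adj x w' ∧ w' ≠ w) := by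
    intro x w
    by_cases h : T.Adj x w
    · obtain ⟨w', hw'⟩ := htwo x w h
      exact ⟨w', fun _ => hw'⟩
    · exact ⟨x, fun h' => absurd h' h⟩
  choose next hnext using htwo'
  -- ray builder
  have key : ∀ (a b : V), T.Adj a b → ∃ r : ℕ → V, r 0 = a ∧ r 1 = b ∧
      (∀ n, T.Adj (r n) (r (n+1))) ∧ (∀ n, r (n+2) ≠ r n) := by
    intro a b hab
    set F : ℕ → V × V := fun n => Nat.rec (a, b) (fun _ p => (p.2, next p.2 p.1)) n with hFdef
    have hFadj : ∀ n, T.Adj (F n).1 (F n).2 := by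
      intro n
      induction n with
      | zero => exact hab
      | succ m ih => exact (hnext (F m).2 (F m).1 ih.symm).1
    have hFne : ∀ n, (F (n+1)).2 ≠ (F n).1 := by
      intro n
      exact (hnext (F n).2 (F n).1 (hFadj n).symm).2
    refine ⟨fun n => (F n).1, rfl, rfl, ?_, ?_⟩
    · intro n; exact hFadj n
    · intro n; exact hFne n
  obtain ⟨w0, hw0⟩ := hne v
  obtain ⟨w1, hw1, hw10⟩ := htwo v w0 hw0
  obtain ⟨rA, hrA0, hrA1, hrAadj, hrAne⟩ := key v w0 hw0
  obtain ⟨rB, hrB0, hrB1, hrBadj, hrBne⟩ := key v w1 hw1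
  set δ : ℤ → V := fun t => if 0 ≤ t then rA t.toNat else rB (-t).toNat with hδdef
  have hδpos : ∀ t : ℤ, 0 ≤ t → δ t = rA t.toNat := by
    intro t ht; show (if 0 ≤ t then _ else _) = _; rw [if_pos ht]
  have hδneg : ∀ t : ℤ, t < 0 → δ t = rB (-t).toNat := by
    intro t ht; show (if 0 ≤ t then _ else _) = _; rw [if_neg (by omega)]
  have hadjδ : ∀ t : ℤ, T.Adj (δ t) (δ (t+1)) := by
    intro t
    rcases lt_trichotomy t (-1) with ht | ht | ht
    · rw [hδneg t (by omega), hδneg (t+1) (by omega),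
        show (-t).toNat = (-(t+1)).toNat + 1 from by omega]
      exact (hrBadj (-(t+1)).toNat).symm
    · subst ht
      rw [hδneg (-1) (by omega), show (-1:ℤ)+1 = 0 from rfl, hδpos 0 le_rfl,
        show ((-(-1):ℤ).toNat) = 1 from rfl, show ((0:ℤ).toNat) = 0 from rfl,
        hrB1, hrA0]
      exact hw1.symm
    · rw [hδpos t (by omega), hδpos (t+1) (by omega),
        show (t+1).toNat = t.toNat + 1 from by omega]
      exact hrAadj t.toNat
  have hnbδ : ∀ t : ℤ, δ (t+1) ≠ δ (t-1) := by
    intro t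
    rcases lt_trichotomy t (-1) with ht | ht | ht
    · rw [hδneg (t+1) (by omega), hδneg (t-1) (by omega),
        show (-(t-1)).toNat = (-(t+1)).toNat + 2 from by omega]
      exact (hrBne (-(t+1)).toNat).symm
    · subst ht
      rw [show (-1:ℤ)+1 = 0 from rfl, show (-1:ℤ)-1 = -2 from rfl,
        hδpos 0 le_rfl, hδneg (-2) (by omega),
        show ((0:ℤ).toNat) = 0 from rfl, show ((-(-2):ℤ).toNat) = 2 from rfl,
        hrA0, ← hrB0]
      exact fun h => hrBne 0 h.symm
    · rcases lt_trichotomy t 0 with ht1 | ht1 | ht1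
      · omega
      · subst ht1
        rw [show (0:ℤ)+1 = 1 from rfl, show (0:ℤ)-1 = -1 from rfl,
          hδpos 1 (by omega), hδneg (-1) (by omega),
          show ((1:ℤ).toNat) = 1 from rfl, show ((-(-1):ℤ).toNat) = 1 from rfl,
          hrA1, hrB1]
        exact fun h => hw10 (h ▸ rfl)
      · rw [hδpos (t+1) (by omega), hδpos (t-1) (by omega),
          show (t+1).toNat = (t-1).toNat + 2 from by omega]
        exact hrAne (t-1).toNat
  refine ⟨δ, nb_geodesic htree δ hadjδ hnbδ, ?_⟩
  rw [hδpos 0 le_rfl, show ((0:ℤ).toNat) = 0 from rfl, hrA0]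


/-- A bi-infinite geodesic in a graph: a map `γ : ℤ → V` such that the graph distance
between `γ m` and `γ n` is `|m - n|`. -/
def IsBiInfGeodesic (T : SimpleGraph V) (γ : ℤ → V) : Prop :=
  ∀ m n : ℤ, T.dist (γ m) (γ n) = (m - n).natAbs

/-- A set of vertices is cobounded if every vertex lies within a uniformly bounded graph
distance of it. -/
def IsCoboundedVertexSet (T : SimpleGraph V) (S : Set V) : Prop :=
  ∃ r : ℕ, ∀ v : V, ∃ s ∈ S, T.dist v s ≤ r

/-- A subtree: a (nonempty) set of vertices whose induced subgraph is connected. -/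
def IsSubtree (T : SimpleGraph V) (S : Set V) : Prop :=
  (T.induce S).Connected

end Helpers

/-- **Lemma `tprime`.** Let `T` be a tree with unbounded vertex set whose automorphism group
has finitely many orbits of vertices. Then the set `S` of vertices lying on some bi-infinite
geodesic is nonempty, is a subtree, is cobounded, is contained in every cobounded subtree
(hence is the unique minimal cobounded subtree), and equals the whole vertex set iff `T` has
no vertex of degree 1. -/
theorem minimal_cobounded_subtree (T : SimpleGraph V) (htree : T.IsTree)
    (hunbounded : ¬ ∃ C : ℕ, ∀ u v : V, T.dist u v ≤ C)
    (horbits : ∃ F : Set V, F.Finite ∧ ∀ v : V, ∃ φ : T ≃g T, φ v ∈ F) :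
    let S : Set V := {v | ∃ γ : ℤ → V, IsBiInfGeodesic T γ ∧ ∃ n : ℤ, γ n = v}
    S.Nonempty ∧
    IsSubtree T S ∧
    IsCoboundedVertexSet T S ∧
    (∀ S' : Set V, IsSubtree T S' → IsCoboundedVertexSet T S' → S ⊆ S') ∧
    (S = Set.univ ↔ ¬ ∃ v : V, ∃! w : V, T.Adj v w) := by
  intro S
  classical
  obtain ⟨F, hFfin, hFmap⟩ := horbits
  have hconn : T.Connected := htree.isConnected
  push_neg at hunbounded
  choose Φ hΦ using hFmap
  have hgeo_mem : ∀ (δ : ℤ → V) (n : ℤ),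
      (∀ m k : ℤ, T.dist (δ m) (δ k) = (m - k).natAbs) → δ n ∈ S :=
    fun δ n h => ⟨δ, h, n, rfl⟩
  have hshift : ∀ (γ : ℤ → V), (∀ m k : ℤ, T.dist (γ m) (γ k) = (m - k).natAbs) →
      ∀ (a : ℤ), ∀ m k : ℤ, T.dist (γ (a + m)) (γ (a + k)) = (m - k).natAbs := by
    intro γ hγ a m k
    have := hγ (a + m) (a + k)
    rwa [show a + m - (a + k) = m - k from by ring] at this
  -- ===== Part 1 : Nonempty =====
  have hNE : S.Nonempty := by
    set K := hFfin.toFinset.card with hKdef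
    obtain ⟨u, v, huv⟩ := hunbounded (2 * K + 2)
    set M := T.dist u v with hMdef
    obtain ⟨c, hc0, hcM, hcadj, hcinj, -⟩ := exists_param htree u v
    rw [← hMdef] at hcM hcadj hcinj
    have hmaps : ∀ i ∈ Finset.Icc 1 (M - 1),
        (fun i => Φ (c i) (c i)) i ∈ hFfin.toFinset := by
      intro i _
      simp only [Set.Finite.mem_toFinset]
      exact hΦ (c i)
    have hcard : hFfin.toFinset.card * 2 < (Finset.Icc 1 (M - 1)).card := by
      rw [Nat.card_Icc]
      omega
    obtain ⟨f, hfF, hfib⟩ :=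
      Finset.exists_lt_card_fiber_of_mul_lt_card_of_maps_to hmaps hcard
    rw [Finset.two_lt_card_iff] at hfib
    obtain ⟨x, y, z, hx, hy, hz, hxy, hxz, hyz⟩ := hfib
    have hPx := Finset.mem_filter.mp hx
    have hPy := Finset.mem_filter.mp hy
    have hPz := Finset.mem_filter.mp hz
    obtain ⟨k, l, m, hkl, hlm, hPk, hPl, hPm⟩ :=
      three_sorted (P := fun i => i ∈ Finset.Icc 1 (M-1) ∧ Φ (c i) (c i) = f)
        ⟨hPx.1, hPx.2⟩ ⟨hPy.1, hPy.2⟩ ⟨hPz.1, hPz.2⟩ hxy hxz hyz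
    set aF : ℕ → V := fun i => Φ (c i) (c (i+1)) with haF
    set bF : ℕ → V := fun i => Φ (c i) (c (i-1)) with hbF
    have hgp : ∃ i j, i < j ∧ (i ∈ Finset.Icc 1 (M-1) ∧ Φ (c i) (c i) = f) ∧
        (j ∈ Finset.Icc 1 (M-1) ∧ Φ (c j) (c j) = f) ∧ aF i ≠ bF j := by
      by_cases g1 : aF k = bF l
      · by_cases g2 : aF l = bF m
        · by_cases g3 : aF k = bF m
          · exfalso
            have h5 : aF l = bF l := by rw [g2, ← g3, g1]
            have h6 : c (l + 1) = c (l - 1) := (Φ (c l)).injective h5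
            have hlmem := Finset.mem_Icc.mp hPl.1
            have := hcinj (l+1) (l-1) (by omega) (by omega) h6
            omega
          · exact ⟨k, m, by omega, hPk, hPm, g3⟩
        · exact ⟨l, m, by omega, hPl, hPm, g2⟩
      · exact ⟨k, l, hkl, hPk, hPl, g1⟩
    obtain ⟨i, j, hij, ⟨hiIcc, hif⟩, ⟨hjIcc, hjf⟩, hgood0⟩ := hgp
    have hiM := Finset.mem_Icc.mp hiIcc
    have hjM := Finset.mem_Icc.mp hjIcc
    set α : T ≃g T := (Φ (c i)).trans (Φ (c j)).symm with hαdef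
    have htr : α (c i) = c j := by
      show (Φ (c j)).symm (Φ (c i) (c i)) = c j
      rw [hif, ← hjf]
      exact (Φ (c j)).symm_apply_apply _
    have hgood : α (c (i+1)) ≠ c (j-1) := by
      intro hEq
      apply hgood0
      have h6 := congrArg (Φ (c j)) hEq
      rw [show α (c (i+1)) = (Φ (c j)).symm (Φ (c i) (c (i+1))) from rfl,
        RelIso.apply_symm_apply] at h6
      exact h6
    obtain ⟨δ, hδgeo, hδ0⟩ := exists_geodesic_of_translate htree α
      (fun s => c (i + s)) (j - i) (by omega)
      (fun k hk => hcadj (i + k) (by omega))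
      (fun a b ha hb hab => by
        have := hcinj (i + a) (i + b) (by omega) (by omega) hab
        omega)
      (by
        show α (c (i + 0)) = c (i + (j - i))
        rw [show i + 0 = i from rfl, show i + (j - i) = j from by omega]
        exact htr)
      (by
        show α (c (i + 1)) ≠ c (i + (j - i - 1))
        rw [show i + (j - i - 1) = j - 1 from by omega]
        exact hgood)
    exact ⟨δ 0, hgeo_mem δ 0 hδgeo⟩
  -- ===== Part 2 : Subtree =====
  have hmemS_path : ∀ (a b : V), a ∈ S → b ∈ S → ∀ (p : T.Walk a b), p.IsPath →
      ∀ x ∈ p.support, x ∈ S := by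
    intro a b ha hb p hp x hxp
    obtain ⟨γa, hγa, na, hna⟩ := ha
    obtain ⟨γb, hγb, nb', hnb⟩ := hb
    by_cases hab : a = b
    · subst hab
      have hnil : p = Walk.nil := (htree.existsUnique_path a a).unique hp Walk.IsPath.nil
      rw [hnil] at hxp
      simp only [Walk.support_nil, List.mem_singleton] at hxp
      subst hxp
      exact ⟨γa, hγa, na, hna⟩
    · obtain ⟨c, hc0, hcD, hcadj, hcinj, hcsupp⟩ := exists_param htree a b
      set D := T.dist a b with hDdef
      have hD1 : 1 ≤ D := by
        rcases Nat.eq_zero_or_pos D with h0 | h0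
        · exact absurd (hconn.dist_eq_zero_iff.mp h0) hab
        · omega
      rw [hcsupp p hp] at hxp
      simp only [List.mem_map, List.mem_range] at hxp
      obtain ⟨t, ht, hct⟩ := hxp
      obtain ⟨δ, hδgeo, nδ, hδn⟩ := geodesic_through_path htree
        (fun s => γa (na + s)) (fun s => γb (nb' + s))
        (hshift γa hγa na) (hshift γb hγb nb')
        (by show γa (na + 0) = a; rw [add_zero]; exact hna)
        (by show γb (nb' + 0) = b; rw [add_zero]; exact hnb)
        c D hD1 hc0 hcD hcadj hcinj t (by omega)
      exact ⟨δ, hδgeo, nδ, by rw [hδn, hct]⟩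
  have hSubtree : IsSubtree T S := by
    show (T.induce S).Connected
    rw [connected_iff]
    constructor
    · rintro ⟨ua, hua⟩ ⟨ub, hub⟩
      obtain ⟨w0, -⟩ := (hconn ua ub).exists_walk_length_eq_dist
      exact reachable_in_induce w0.bypass
        (hmemS_path ua ub hua hub w0.bypass w0.bypass_isPath) hua hub
    · exact hNE.to_subtype
  -- ===== Part 3 : Cobounded =====
  obtain ⟨s0, hs0⟩ := hNE
  have hSinv : ∀ w, w ∈ S → ∀ ψ : T ≃g T, ψ w ∈ S := by
    rintro w ⟨γ, hγ, n, hn⟩ ψ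
    exact ⟨fun t => ψ (γ t), fun m k => by rw [iso_dist hconn ψ, hγ], n,
      by show ψ (γ n) = ψ w; rw [hn]⟩
  have hCob : IsCoboundedVertexSet T S := by
    refine ⟨Finset.sup hFfin.toFinset (fun f => T.dist f s0), fun w => ?_⟩
    refine ⟨(Φ w).symm s0, hSinv s0 hs0 (Φ w).symm, ?_⟩
    have h1 : T.dist w ((Φ w).symm s0) = T.dist (Φ w w) s0 := by
      have := iso_dist hconn (Φ w) w ((Φ w).symm s0)
      rw [RelIso.apply_symm_apply] at this
      exact this.symm
    rw [h1]
    exact Finset.le_sup (f := fun f => T.dist f s0) (hFfin.mem_toFinset.mpr (hΦ w))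
  -- ===== Part 4 : Minimality =====
  have hMin : ∀ S' : Set V, IsSubtree T S' → IsCoboundedVertexSet T S' → S ⊆ S' := by
    intro S' hsub hcob w hw
    obtain ⟨γ, hγ, k, hk⟩ := hw
    obtain ⟨r, hr⟩ := hcob
    obtain ⟨s1, hs1S, hs1d⟩ := hr (γ (k - ((r:ℤ) + 1)))
    obtain ⟨s2, hs2S, hs2d⟩ := hr (γ (k + ((r:ℤ) + 1)))
    obtain ⟨q⟩ := (hsub).preconnected ⟨s1, hs1S⟩ ⟨s2, hs2S⟩
    obtain ⟨w', hw'⟩ := walk_of_induced q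
    have hv : T.dist (γ (k - ((r:ℤ)+1))) w + T.dist w (γ (k + ((r:ℤ)+1)))
        = T.dist (γ (k - ((r:ℤ)+1))) (γ (k + ((r:ℤ)+1))) := by
      rw [← hk, hγ, hγ, hγ]
      omega
    have e1 : T.dist (γ (k - ((r:ℤ)+1))) w = r + 1 := by
      rw [← hk, hγ]
      omega
    have e2 : T.dist w (γ (k + ((r:ℤ)+1))) = r + 1 := by
      rw [← hk, hγ]
      omega
    have hxlt : T.dist (γ (k - ((r:ℤ)+1))) s1 < T.dist (γ (k - ((r:ℤ)+1))) w := by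
      omega
    have hylt : T.dist (γ (k + ((r:ℤ)+1))) s2 < T.dist w (γ (k + ((r:ℤ)+1))) := by
      omega
    exact hw' w (sep_lemma htree hv hxlt hylt w')
  -- ===== Part 5 : leaf criterion =====
  have hLeaf : S = Set.univ ↔ ¬ ∃ v : V, ∃! w : V, T.Adj v w := by
    constructor
    · rintro hS ⟨x, wx, hwx, huniq⟩
      have hxS : x ∈ S := by rw [hS]; trivial
      obtain ⟨γ, hγ, k, hk⟩ := hxS
      have h1 : T.Adj x (γ (k+1)) := by
        rw [← hk]
        exact geo_adj hγ k (k+1) (by omega)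
      have h2 : T.Adj x (γ (k-1)) := by
        rw [← hk]
        exact geo_adj hγ k (k-1) (by omega)
      have hEq : γ (k+1) = γ (k-1) := by rw [huniq _ h1, huniq _ h2]
      have := geo_inj hγ hEq
      omega
    · intro hnl
      apply Set.eq_univ_of_forall
      intro x
      have hne : ∀ p : V, ∃ w, T.Adj p w := by
        intro p
        obtain ⟨u0, v0, h00⟩ := hunbounded 0
        have hne0 : u0 ≠ v0 := by
          intro h
          rw [h, SimpleGraph.dist_self] at h00
          omega
        have hyex : ∃ yy : V, yy ≠ p := by
          by_cases hpu : p = u0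
          · exact ⟨v0, fun h => hne0 (h.trans hpu).symm⟩
          · exact ⟨u0, fun h => hpu h.symm⟩
        obtain ⟨yy, hyy⟩ := hyex
        obtain ⟨wk⟩ := hconn p yy
        cases wk with
        | nil => exact absurd rfl hyy
        | cons h q => exact ⟨_, h⟩
      obtain ⟨δ, hδgeo, hδ0⟩ := geodesic_of_no_leaf htree hne hnl x
      exact hδ0 ▸ hgeo_mem δ 0 hδgeo
  exact ⟨⟨s0, hs0⟩, hSubtree, hCob, hMin, hLeaf⟩
end

section
/- Let T be a tree with graph metric d, let γ : ℤ → V(T) be a bi-infinite geodesic (d(γ(m), γ(n)) = |m − n| for all m, n ∈ ℤ), and let S be a cobounded subtree of T (S is a nonempty set of vertices whose induced subgraph is connected, and there is r ≥ 0 such that every vertex of T lies within distance r of S). Then γ(n) ∈ S for every n ∈ ℤ. -/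
variable {V : Type*}

section Aux

open SimpleGraph

/-- A walk whose length is the distance between its endpoints is a path. -/
lemma aux_isPath_of_length_eq_dist {T : SimpleGraph V} {a b : V} (c : T.Walk a b)
    (h : c.length = T.dist a b) : c.IsPath := by
  classical
  have h1 : T.dist a b ≤ c.bypass.length := SimpleGraph.dist_le _
  have h2 : c.bypass = c := c.bypass_eq_self_of_length_le (h ▸ h1)
  rw [← h2]; exact c.bypass_isPath

/-- In a tree, every path has length equal to the distance between its endpoints. -/
lemma aux_path_length {T : SimpleGraph V} (ht : T.IsTree) {a b : V} (p : T.Walk a b)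
    (hp : p.IsPath) : p.length = T.dist a b := by
  classical
  obtain ⟨q, hq⟩ := (ht.isConnected a b).exists_walk_length_eq_dist
  have hq1 : q.bypass.length = T.dist a b :=
    le_antisymm (hq ▸ q.length_bypass_le) (SimpleGraph.dist_le _)
  have := ht.IsAcyclic.path_unique ⟨p, hp⟩ q.toPath
  have hpl : p = q.bypass := congrArg Subtype.val this
  rw [hpl, hq1]

/-- In a tree, a vertex `v` with `d a v + d v b = d a b` lies on every walk from `a` to `b`. -/
lemma aux_mem_support {T : SimpleGraph V} (ht : T.IsTree) {a b v : V}
    (h : T.dist a v + T.dist v b = T.dist a b) (w : T.Walk a b) : v ∈ w.support := by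
  classical
  obtain ⟨p, hp⟩ := (ht.isConnected a v).exists_walk_length_eq_dist
  obtain ⟨q, hq⟩ := (ht.isConnected v b).exists_walk_length_eq_dist
  set c := p.append q with hc
  have hcl : c.length = T.dist a b := by
    rw [hc, SimpleGraph.Walk.length_append, hp, hq, h]
  have hcp : c.IsPath := aux_isPath_of_length_eq_dist c hcl
  have hv : v ∈ c.support := by
    rw [hc, SimpleGraph.Walk.mem_support_append_iff]
    exact Or.inl p.end_mem_support
  have := ht.IsAcyclic.path_unique ⟨c, hcp⟩ w.toPath
  have hcw : c = w.bypass := congrArg Subtype.val this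
  exact w.support_bypass_subset (hcw ▸ hv)

/-- If `v` lies on a walk from `a` to `b`, then `d a v + d v b ≤ ` the walk's length. -/
lemma aux_dist_add_dist_le {T : SimpleGraph V} {a b v : V} (w : T.Walk a b)
    (hv : v ∈ w.support) : T.dist a v + T.dist v b ≤ w.length := by
  classical
  have hspec := w.take_spec hv
  have hlen : (w.takeUntil v hv).length + (w.dropUntil v hv).length = w.length := by
    rw [← SimpleGraph.Walk.length_append, hspec]
  calc T.dist a v + T.dist v b
      ≤ (w.takeUntil v hv).length + (w.dropUntil v hv).length :=
        Nat.add_le_add (SimpleGraph.dist_le _) (SimpleGraph.dist_le _)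
    _ = w.length := hlen

end Aux

/-- **Key step in the proof of Lemma `tprime`.** In a tree, every bi-infinite geodesic is
contained in every cobounded subtree. -/
theorem axis_subset_cobounded_subtree (T : SimpleGraph V) (htree : T.IsTree)
    (γ : ℤ → V) (hγ : IsBiInfGeodesic T γ)
    (S : Set V) (hsub : IsSubtree T S) (hcob : IsCoboundedVertexSet T S) :
    ∀ n : ℤ, γ n ∈ S := by
  classical
  obtain ⟨r, hr⟩ := hcob
  intro n
  set k : ℤ := (r : ℤ) + 1 with hk
  set a := γ (n - k) with ha
  set b := γ (n + k) with hb
  set v := γ n with hv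
  -- distances along the geodesic
  have dav : T.dist a v = r + 1 := by
    have := hγ (n - k) n
    rw [ha, hv, this]; omega
  have dvb : T.dist v b = r + 1 := by
    have := hγ n (n + k)
    rw [hv, hb, this]; omega
  have dab : T.dist a b = 2 * (r + 1) := by
    have := hγ (n - k) (n + k)
    rw [ha, hb, this]; omega
  -- pick nearby points of S
  obtain ⟨s₁, hs₁S, hs₁⟩ := hr a
  obtain ⟨s₂, hs₂S, hs₂⟩ := hr b
  -- a walk inside S from s₁ to s₂
  obtain ⟨w₀⟩ := hsub.preconnected ⟨s₁, hs₁S⟩ ⟨s₂, hs₂S⟩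
  let ι : T.induce S ↪g T := SimpleGraph.Embedding.induce S
  let wS : T.Walk s₁ s₂ := w₀.map ι.toHom
  have hwS_support : ∀ x ∈ wS.support, x ∈ S := by
    intro x hx
    replace hx : x ∈ (w₀.map ι.toHom).support := hx
    rw [SimpleGraph.Walk.support_map, List.mem_map] at hx
    obtain ⟨y, _, hy⟩ := hx
    rw [← hy]
    exact y.2
  -- geodesic walks from a to s₁ and from s₂ to b
  obtain ⟨p, hp⟩ := (htree.isConnected a s₁).exists_walk_length_eq_dist
  obtain ⟨q, hq⟩ := (htree.isConnected s₂ b).exists_walk_length_eq_dist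
  -- the big walk from a to b
  let w : T.Walk a b := (p.append wS).append q
  have hdist : T.dist a v + T.dist v b = T.dist a b := by
    rw [dav, dvb, dab]; ring
  have hvw : v ∈ w.support := aux_mem_support htree hdist w
  -- v cannot lie on p
  have hvp : v ∉ p.support := by
    intro hmem
    have h1 : T.dist a v + T.dist v s₁ ≤ p.length := aux_dist_add_dist_le p hmem
    rw [hp, dav] at h1
    omega
  have hvq : v ∉ q.support := by
    intro hmem
    have h1 : T.dist s₂ v + T.dist v b ≤ q.length := aux_dist_add_dist_le q hmem
    rw [hq, dvb] at h1
    have hsym : T.dist b s₂ = T.dist s₂ b := SimpleGraph.dist_comm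
    omega
  have : v ∈ wS.support := by
    rw [SimpleGraph.Walk.mem_support_append_iff, SimpleGraph.Walk.mem_support_append_iff] at hvw
    rcases hvw with (h | h) | h
    · exact absurd h hvp
    · exact h
    · exact absurd h hvq
  exact hwS_support v this
end

section
/- Let T be a tree, and let J be a metric space with uniformly finite balls: for every r ≥ 0 there is a constant C(r) such that every closed ball of radius r in J contains at most C(r) points. Suppose there is a quasi-isometry f from the vertex set of T (with the graph metric) to J. Then there exist a tree T'' of bounded valency (there is D such that every vertex of T'' has degree at most D) and a quasi-isometry from the vertex set of T'' (with the graph metric) to J. -/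
universe u v

variable {V : Type u} {J : Type v}

/-- A quasi-isometry from the vertex set of a graph (with the graph metric) to a metric
space. -/
def IsGraphQuasiIsometry (T : SimpleGraph V) [MetricSpace J] (f : V → J) : Prop :=
  ∃ μ α : ℝ, 1 ≤ μ ∧ 0 ≤ α ∧
    (∀ u v : V,
      (1 / μ) * (T.dist u v : ℝ) - α ≤ dist (f u) (f v) ∧
      dist (f u) (f v) ≤ μ * (T.dist u v : ℝ) + α) ∧
    ∀ x : J, ∃ v : V, dist x (f v) ≤ α

namespace QITAux
open SimpleGraph

variable {V : Type u}

noncomputable def geod (T : SimpleGraph V) (hc : T.Connected) (u v : V) : T.Walk u v :=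
  (hc.exists_path_of_dist u v).choose

lemma geod_isPath (T : SimpleGraph V) (hc : T.Connected) (u v : V) :
    (geod T hc u v).IsPath := (hc.exists_path_of_dist u v).choose_spec.1

lemma geod_length (T : SimpleGraph V) (hc : T.Connected) (u v : V) :
    (geod T hc u v).length = T.dist u v := (hc.exists_path_of_dist u v).choose_spec.2

/-- parent toward root `r` -/
noncomputable def pT (T : SimpleGraph V) (hc : T.Connected) (r u : V) : V :=
  (geod T hc u r).getVert 1

lemma pT_adj (T : SimpleGraph V) (hc : T.Connected) (r u : V) (h : u ≠ r) :
    T.Adj u (pT T hc r u) := by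
  have hl : 0 < (geod T hc u r).length := by
    rw [geod_length]; exact hc.pos_dist_of_ne h
  have := (geod T hc u r).adj_getVert_succ hl
  rwa [Walk.getVert_zero] at this

lemma pT_level (T : SimpleGraph V) (hc : T.Connected) (r u : V) (h : u ≠ r) :
    T.dist (pT T hc r u) r + 1 = T.dist u r := by
  have hnil : ¬ (geod T hc u r).Nil := by
    rw [Walk.nil_iff_length_eq, geod_length]
    exact (hc.pos_dist_of_ne h).ne'
  have h1 : T.dist (pT T hc r u) r ≤ (geod T hc u r).length - 1 := by
    have h2 := SimpleGraph.dist_le (geod T hc u r).tail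
    have hlen := Walk.length_tail_add_one hnil
    exact le_trans h2 (by omega)
  have h3 : T.dist u r ≤ T.dist u (pT T hc r u) + T.dist (pT T hc r u) r :=
    hc.dist_triangle
  have h4 : T.dist u (pT T hc r u) ≤ 1 := by
    rw [← SimpleGraph.dist_eq_one_iff_adj.mpr (pT_adj T hc r u h)]
  have h5 : 0 < T.dist u r := hc.pos_dist_of_ne h
  rw [geod_length] at h1
  omega


lemma getVert_one_takeUntil [DecidableEq V] {T : SimpleGraph V} {u v y : V} (p : T.Walk u v)
    (h : y ∈ p.support) (hne : y ≠ u) :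
    (p.takeUntil y h).getVert 1 = p.getVert 1 := by
  have hspec := p.take_spec h
  have hlen : (p.takeUntil y h).length ≠ 0 := by
    intro h0
    exact hne (SimpleGraph.Walk.eq_of_length_eq_zero h0).symm
  have := SimpleGraph.Walk.getVert_append (p.takeUntil y h) (p.dropUntil y h) 1
  rw [hspec] at this
  rcases Nat.lt_or_ge 1 (p.takeUntil y h).length with hl | hl
  · rw [this, if_pos hl]
  · have h1 : (p.takeUntil y h).length = 1 := by omega
    rw [this, if_neg (by omega), h1]
    have e1 : (p.dropUntil y h).getVert (1-1) = y := by
      simp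
    rw [e1, ← h1]
    exact SimpleGraph.Walk.getVert_length _

lemma geod_snd_dist (T : SimpleGraph V) (hc : T.Connected) (u v : V) (h : u ≠ v) :
    T.dist ((geod T hc u v).getVert 1) v + 1 = T.dist u v := by
  have hnil : ¬ (geod T hc u v).Nil := by
    rw [Walk.nil_iff_length_eq, geod_length]
    exact (hc.pos_dist_of_ne h).ne'
  have h1 : T.dist ((geod T hc u v).getVert 1) v ≤ (geod T hc u v).length - 1 := by
    have h2 := SimpleGraph.dist_le (geod T hc u v).tail
    have hlen := Walk.length_tail_add_one hnil
    exact le_trans h2 (by omega)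
  have hadj : T.Adj u ((geod T hc u v).getVert 1) := by
    have hl : 0 < (geod T hc u v).length := by
      rw [geod_length]; exact hc.pos_dist_of_ne h
    have := (geod T hc u v).adj_getVert_succ hl
    rwa [SimpleGraph.Walk.getVert_zero] at this
  have h3 : T.dist u v ≤ T.dist u ((geod T hc u v).getVert 1)
      + T.dist ((geod T hc u v).getVert 1) v := hc.dist_triangle
  have h4 : T.dist u ((geod T hc u v).getVert 1) ≤ 1 :=
    le_of_eq (SimpleGraph.dist_eq_one_iff_adj.mpr hadj)
  have h5 : 0 < T.dist u v := hc.pos_dist_of_ne h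
  rw [geod_length] at h1
  omega

/-- KEY geometric lemma: if `v` is at level at most that of `u` (and distinct),
then the parent of `u` is one step closer to `v`. -/
lemma parent_toward (T : SimpleGraph V) (ht : T.IsTree) (r u v : V)
    (hne : u ≠ v) (hlev : T.dist v r ≤ T.dist u r) :
    T.dist (pT T ht.isConnected r u) v + 1 = T.dist u v := by
  classical
  have hc := ht.isConnected
  have hur : u ≠ r := by
    rintro rfl
    have h0 : T.dist v u = 0 := Nat.le_zero.mp (le_trans hlev (le_of_eq SimpleGraph.dist_self))
    exact hne ((hc.dist_eq_zero_iff.mp h0).symm)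
  set p := geod T hc u v with hp
  set q := geod T hc u r with hq
  -- suffices: second vertices agree
  suffices hxw : p.getVert 1 = pT T hc r u by
    rw [← hxw]
    exact geod_snd_dist T hc u v hne
  by_contra hxw
  -- supports intersect only at u
  have hint : ∀ y, y ∈ p.support → y ∈ q.support → y = u := by
    intro y hyp hyq
    by_contra hyu
    have h1 : (p.takeUntil y hyp).IsPath := (geod_isPath T hc u v).takeUntil hyp
    have h2 : (q.takeUntil y hyq).IsPath := (geod_isPath T hc u r).takeUntil hyq
    have heq : (⟨p.takeUntil y hyp, h1⟩ : T.Path u y) = ⟨q.takeUntil y hyq, h2⟩ :=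
      ht.IsAcyclic.path_unique _ _
    have heq' : p.takeUntil y hyp = q.takeUntil y hyq := congrArg Subtype.val heq
    have g1 := getVert_one_takeUntil p hyp hyu
    have g2 := getVert_one_takeUntil q hyq hyu
    apply hxw
    rw [← g1, heq', g2]
    rfl
  -- hence the concatenation is a path from v to r
  have hWpath : (p.reverse.append q).IsPath := by
    rw [SimpleGraph.Walk.isPath_def, SimpleGraph.Walk.support_append]
    refine List.Nodup.append ?_ ?_ ?_
    · rw [SimpleGraph.Walk.support_reverse]
      exact List.nodup_reverse.mpr (geod_isPath T hc u v).support_nodup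
    · exact ((geod_isPath T hc u r).support_nodup).sublist (List.tail_sublist _)
    · intro y hy1 hy2
      have hy1' : y ∈ p.support := by
        rw [SimpleGraph.Walk.support_reverse, List.mem_reverse] at hy1
        exact hy1
      have hy2' : y ∈ q.support := List.mem_of_mem_tail hy2
      have hyu : y = u := hint y hy1' hy2'
      rw [hyu] at hy2
      have hnd := (geod_isPath T hc u r).support_nodup
      rw [SimpleGraph.Walk.support_eq_cons] at hnd
      exact (List.nodup_cons.mp hnd).1 hy2
  -- the unique path from v to r would have length dist u v + dist u r > dist v r
  have hlen : (p.reverse.append q).length = T.dist u v + T.dist u r := by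
    rw [SimpleGraph.Walk.length_append, SimpleGraph.Walk.length_reverse,
      geod_length, geod_length]
  have huniq : (⟨p.reverse.append q, hWpath⟩ : T.Path v r) =
      ⟨geod T hc v r, geod_isPath T hc v r⟩ := ht.IsAcyclic.path_unique _ _
  have hlen2 : (p.reverse.append q).length = T.dist v r := by
    have hval : p.reverse.append q = geod T hc v r := congrArg Subtype.val huniq
    rw [hval]
    exact geod_length T hc v r
  have hpos : 0 < T.dist u v := hc.pos_dist_of_ne hne
  omega

lemma pT_root (T : SimpleGraph V) (hc : T.Connected) (r : V) : pT T hc r r = r := by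
  have h0 : (geod T hc r r).length ≤ 1 := by
    rw [geod_length]; simp [SimpleGraph.dist_self]
  exact SimpleGraph.Walk.getVert_of_length_le _ h0

lemma pT_dist_le_one (T : SimpleGraph V) (hc : T.Connected) (r u : V) :
    T.dist u (pT T hc r u) ≤ 1 := by
  by_cases h : u = r
  · subst h; rw [pT_root]; simp [SimpleGraph.dist_self]
  · exact le_of_eq (SimpleGraph.dist_eq_one_iff_adj.mpr (pT_adj T hc r u h))

lemma iter_dist (T : SimpleGraph V) (hc : T.Connected) (r : V) :
    ∀ n (x : V), T.dist x ((pT T hc r)^[n] x) ≤ n := by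
  intro n
  induction n with
  | zero => intro x; simp [SimpleGraph.dist_self]
  | succ n ih =>
    intro x
    rw [Function.iterate_succ_apply']
    calc T.dist x (pT T hc r ((pT T hc r)^[n] x))
        ≤ T.dist x ((pT T hc r)^[n] x)
          + T.dist ((pT T hc r)^[n] x) (pT T hc r ((pT T hc r)^[n] x)) := hc.dist_triangle
      _ ≤ n + 1 := Nat.add_le_add (ih x) (pT_dist_le_one T hc r _)

lemma iter_level (T : SimpleGraph V) (hc : T.Connected) (r : V) :
    ∀ n (x : V), n ≤ T.dist x r → T.dist ((pT T hc r)^[n] x) r + n = T.dist x r := by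
  intro n
  induction n with
  | zero => intro x _; simp
  | succ n ih =>
    intro x hn
    have ihx := ih x (by omega)
    have hne : (pT T hc r)^[n] x ≠ r := by
      intro h
      rw [h] at ihx
      rw [SimpleGraph.dist_self] at ihx
      omega
    rw [Function.iterate_succ_apply']
    have := pT_level T hc r _ hne
    omega

lemma merge_lemma (T : SimpleGraph V) (ht : T.IsTree) (r : V) :
    ∀ n (x y : V), T.dist x r = T.dist y r → T.dist x y ≤ 2 * n →
      (pT T ht.isConnected r)^[n] x = (pT T ht.isConnected r)^[n] y := by
  have hc := ht.isConnected
  intro n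
  induction n with
  | zero =>
    intro x y _ hd
    simpa using hc.dist_eq_zero_iff.mp (Nat.le_zero.mp (by simpa using hd))
  | succ n ih =>
    intro x y hlev hd
    by_cases hxy : x = y
    · rw [hxy]
    have hxr : x ≠ r := by
      rintro rfl
      have h0 : T.dist x x = 0 := SimpleGraph.dist_self
      exact hxy (hc.dist_eq_zero_iff.mp (by omega : T.dist y x = 0)).symm
    have hyr : y ≠ r := by
      rintro rfl
      have h0 : T.dist y y = 0 := SimpleGraph.dist_self
      exact hxy (hc.dist_eq_zero_iff.mp (by omega : T.dist x y = 0))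
    have g1 := parent_toward T ht r x y hxy (le_of_eq hlev.symm)
    have hpxlev := pT_level T hc r x hxr
    have hpylev := pT_level T hc r y hyr
    have hnepy : y ≠ pT T hc r x := by
      intro h
      rw [← h] at hpxlev
      omega
    have g2 := parent_toward T ht r y (pT T hc r x) hnepy (by omega)
    have g3 : T.dist y (pT T hc r x) = T.dist (pT T hc r x) y := SimpleGraph.dist_comm
    have g4 : T.dist (pT T hc r y) (pT T hc r x)
        = T.dist (pT T hc r x) (pT T hc r y) := SimpleGraph.dist_comm
    rw [Function.iterate_succ_apply, Function.iterate_succ_apply]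
    exact ih (pT T hc r x) (pT T hc r y) (by omega) (by omega)

lemma descend_lemma (T : SimpleGraph V) (ht : T.IsTree) (r : V) :
    ∀ (Δ : ℕ) (x y : V), Δ + T.dist y r ≤ T.dist x r →
      T.dist ((pT T ht.isConnected r)^[Δ] x) y + Δ = T.dist x y := by
  have hc := ht.isConnected
  intro Δ
  induction Δ with
  | zero => intro x y _; simp
  | succ n ih =>
    intro x y hn
    have ihx := ih x y (by omega)
    have hlev := iter_level T hc r n x (by omega)
    have hne : (pT T hc r)^[n] x ≠ y := by
      intro h
      rw [h] at hlev
      omega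
    have hl2 : T.dist y r ≤ T.dist ((pT T hc r)^[n] x) r := by omega
    have := parent_toward T ht r ((pT T hc r)^[n] x) y hne hl2
    rw [Function.iterate_succ_apply']
    omega

lemma common_ancestor_aux (T : SimpleGraph V) (ht : T.IsTree) (r : V) (x y : V) (L : ℕ)
    (hLy : L ≤ T.dist y r) (hyx : T.dist y r ≤ T.dist x r)
    (hsum : 2 * L + T.dist x y ≤ T.dist x r + T.dist y r) :
    (pT T ht.isConnected r)^[T.dist x r - L] x = (pT T ht.isConnected r)^[T.dist y r - L] y := by
  have hc := ht.isConnected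
  have hdes := descend_lemma T ht r (T.dist x r - T.dist y r) x y (by omega)
  have hlev := iter_level T hc r (T.dist x r - T.dist y r) x (by omega)
  have hmer := merge_lemma T ht r (T.dist y r - L)
    ((pT T hc r)^[T.dist x r - T.dist y r] x) y (by omega) (by omega)
  have harep : (pT T hc r)^[T.dist y r - L] ((pT T hc r)^[T.dist x r - T.dist y r] x)
      = (pT T hc r)^[T.dist x r - L] x := by
    rw [← Function.iterate_add_apply]
    congr 1
    omega
  rw [← harep, hmer]

lemma common_ancestor (T : SimpleGraph V) (ht : T.IsTree) (r : V) (x y : V) (L : ℕ)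
    (hLx : L ≤ T.dist x r) (hLy : L ≤ T.dist y r)
    (hsum : 2 * L + T.dist x y ≤ T.dist x r + T.dist y r) :
    (pT T ht.isConnected r)^[T.dist x r - L] x = (pT T ht.isConnected r)^[T.dist y r - L] y := by
  rcases le_total (T.dist y r) (T.dist x r) with h | h
  · exact common_ancestor_aux T ht r x y L hLy h hsum
  · exact (common_ancestor_aux T ht r y x L hLx h
      (by rw [SimpleGraph.dist_comm] at hsum; omega)).symm

set_option linter.unusedSectionVars false

section Construction

variable {J : Type v} [MetricSpace J]

open Classical in
/-- canonical representative of a (value, level) pair -/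
noncomputable def rep (T : SimpleGraph V) (r : V) (f : V → J) (x : J) (n : ℕ) : V :=
  if h : ∃ u : V, f u = x ∧ T.dist u r = n then h.choose else r

/-- canonical representative of a vertex -/
noncomputable def sig (T : SimpleGraph V) (r : V) (f : V → J) (v : V) : V :=
  rep T r f (f v) (T.dist v r)

lemma sig_spec (T : SimpleGraph V) (r : V) (f : V → J) (v : V) :
    f (sig T r f v) = f v ∧ T.dist (sig T r f v) r = T.dist v r := by
  have h : ∃ u : V, f u = f v ∧ T.dist u r = T.dist v r := ⟨v, rfl, rfl⟩
  have : sig T r f v = h.choose := by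
    rw [sig, rep, dif_pos h]
  rw [this]
  exact h.choose_spec

lemma sig_eq_of_eq (T : SimpleGraph V) (r : V) (f : V → J) {u v : V}
    (h1 : f u = f v) (h2 : T.dist u r = T.dist v r) : sig T r f u = sig T r f v := by
  rw [sig, sig, h1, h2]

lemma sig_idem (T : SimpleGraph V) (r : V) (f : V → J) (v : V) :
    sig T r f (sig T r f v) = sig T r f v := by
  have h := sig_spec T r f v
  rw [sig, h.1, h.2]
  rfl

lemma sig_fixed_inj (T : SimpleGraph V) (r : V) (f : V → J) {u v : V}
    (hu : sig T r f u = u) (hv : sig T r f v = v)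
    (h1 : f u = f v) (h2 : T.dist u r = T.dist v r) : u = v := by
  rw [← hu, ← hv]
  exact sig_eq_of_eq T r f h1 h2

lemma sig_root (T : SimpleGraph V) (hc : T.Connected) (r : V) (f : V → J) :
    sig T r f r = r := by
  have h := (sig_spec T r f r).2
  rw [SimpleGraph.dist_self] at h
  exact hc.dist_eq_zero_iff.mp h

/-- the parent map of the new tree -/
noncomputable def par (T : SimpleGraph V) (hc : T.Connected) (r : V) (f : V → J) (k : ℕ)
    (u : V) : V :=
  if 2 * k ≤ T.dist u r then
    sig T r f ((pT T hc r)^[T.dist u r - ((T.dist u r / k) * k - k)] u)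
  else r

variable (T : SimpleGraph V) (ht : T.IsTree) (r : V) (f : V → J) (k : ℕ)

lemma par_level (hk : 1 ≤ k) (u : V) (h : 2 * k ≤ T.dist u r) :
    T.dist (par T ht.isConnected r f k u) r = (T.dist u r / k) * k - k := by
  have hc := ht.isConnected
  rw [par, if_pos h]
  have hdml : (T.dist u r / k) * k ≤ T.dist u r := Nat.div_mul_le_self _ _
  have := iter_level T hc r (T.dist u r - ((T.dist u r / k) * k - k)) u (by omega)
  have hs := (sig_spec T r f ((pT T hc r)^[T.dist u r - ((T.dist u r / k) * k - k)] u)).2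
  omega

lemma par_level_lt (hk : 1 ≤ k) (u : V) (h : u ≠ r) :
    T.dist (par T ht.isConnected r f k u) r < T.dist u r := by
  have hc := ht.isConnected
  by_cases h2 : 2 * k ≤ T.dist u r
  · have := par_level T ht r f k hk u h2
    have hdml : (T.dist u r / k) * k ≤ T.dist u r := Nat.div_mul_le_self _ _
    have h4 : 1 ≤ T.dist u r / k := (Nat.le_div_iff_mul_le (by omega)).mpr (by omega)
    have h6 : 1 * k ≤ (T.dist u r / k) * k := Nat.mul_le_mul_right _ h4
    omega
  · rw [par, if_neg h2]
    rw [SimpleGraph.dist_self]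
    exact ht.isConnected.pos_dist_of_ne h

lemma par_root : par T ht.isConnected r f k r = r := by
  by_cases h : 2 * k ≤ T.dist r r
  · have h0 : T.dist r r = 0 := SimpleGraph.dist_self
    have hk0 : k = 0 := by omega
    subst hk0
    rw [par, if_pos h]
    have : T.dist r r - (T.dist r r / 0 * 0 - 0) = 0 := by omega
    rw [this]
    simp only [Function.iterate_zero, id_eq]
    exact sig_root T ht.isConnected r f
  · rw [par, if_neg h]

lemma par_fixed (hc : T.Connected) (u : V) :
    sig T r f (par T hc r f k u) = par T hc r f k u := by
  rw [par]
  by_cases h : 2 * k ≤ T.dist u r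
  · rw [if_pos h]
    exact sig_idem T r f _
  · rw [if_neg h]
    exact sig_root T hc r f

lemma par_dist (hk : 1 ≤ k) (hsig : ∀ x : V, T.dist x (sig T r f x) ≤ k) (u : V) :
    T.dist u (par T ht.isConnected r f k u) ≤ 3 * k := by
  have hc := ht.isConnected
  rw [par]
  by_cases h : 2 * k ≤ T.dist u r
  · rw [if_pos h]
    set n := T.dist u r - ((T.dist u r / k) * k - k) with hn
    have h1 : T.dist u ((pT T hc r)^[n] u) ≤ n := iter_dist T hc r n u
    have h2 : n ≤ 2 * k := by
      have hdam := Nat.div_add_mod (T.dist u r) k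
      have hmlt : T.dist u r % k < k := Nat.mod_lt _ (by omega)
      have hcomm : k * (T.dist u r / k) = (T.dist u r / k) * k := Nat.mul_comm _ _
      omega
    calc T.dist u (sig T r f ((pT T hc r)^[n] u))
        ≤ T.dist u ((pT T hc r)^[n] u)
          + T.dist ((pT T hc r)^[n] u) (sig T r f ((pT T hc r)^[n] u)) := hc.dist_triangle
      _ ≤ 2 * k + k := Nat.add_le_add (le_trans h1 h2) (hsig _)
      _ = 3 * k := by omega
  · rw [if_neg h]
    calc T.dist u r ≤ 2 * k := by omega
    _ ≤ 3 * k := by omega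

end Construction

section NewTree

variable {J : Type v} [MetricSpace J]

/-- vertex set of the new tree: representatives -/
def Vfix (T : SimpleGraph V) (r : V) (f : V → J) : Type u := {v : V // sig T r f v = v}

/-- the new tree -/
noncomputable def Tnew (T : SimpleGraph V) (hc : T.Connected) (r : V) (f : V → J) (k : ℕ) :
    SimpleGraph (Vfix T r f) :=
  SimpleGraph.fromRel (fun a b => par T hc r f k a.1 = b.1)

/-- chain vertices -/
noncomputable def chain (T : SimpleGraph V) (hc : T.Connected) (r : V) (f : V → J) (k : ℕ)
    (a : V) (j : ℕ) : V :=
  if j = 0 then r else sig T r f ((pT T hc r)^[T.dist a r - j * k] a)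

variable (T : SimpleGraph V) (ht : T.IsTree) (r : V) (f : V → J) (k : ℕ)

lemma chain_fixed (a : V) (j : ℕ) :
    sig T r f (chain T ht.isConnected r f k a j) = chain T ht.isConnected r f k a j := by
  rw [chain]
  by_cases h : j = 0
  · rw [if_pos h]; exact sig_root T ht.isConnected r f
  · rw [if_neg h]; exact sig_idem T r f _

lemma chain_level (a : V) (j : ℕ) (hj : 1 ≤ j) (h : j * k ≤ T.dist a r) :
    T.dist (chain T ht.isConnected r f k a j) r = j * k := by
  have hc := ht.isConnected
  rw [chain, if_neg (by omega)]
  have h1 := iter_level T hc r (T.dist a r - j * k) a (by omega)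
  have h2 := (sig_spec T r f ((pT T hc r)^[T.dist a r - j * k] a)).2
  omega

lemma sig_iter_shift (hk : 1 ≤ k) (hsig : ∀ x : V, T.dist x (sig T r f x) ≤ k)
    (a : V) (L n : ℕ) (hL : L ≤ T.dist a r) (hn : k ≤ n) :
    (pT T ht.isConnected r)^[n] (sig T r f ((pT T ht.isConnected r)^[T.dist a r - L] a))
      = (pT T ht.isConnected r)^[n + (T.dist a r - L)] a := by
  have hc := ht.isConnected
  set y := (pT T hc r)^[T.dist a r - L] a with hy
  have hylev : T.dist y r = L := by
    have h2 := iter_level T hc r (T.dist a r - L) a (by omega)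
    rw [← hy] at h2
    omega
  have hslev : T.dist (sig T r f y) r = L := by rw [(sig_spec T r f y).2, hylev]
  have hmerge : (pT T hc r)^[k] (sig T r f y) = (pT T hc r)^[k] y := by
    apply merge_lemma T ht r k (sig T r f y) y (by omega)
    have h1 : T.dist y (sig T r f y) ≤ k := hsig y
    have h2 : T.dist (sig T r f y) y = T.dist y (sig T r f y) := SimpleGraph.dist_comm
    omega
  have e1 : (pT T hc r)^[n] (sig T r f y) = (pT T hc r)^[n - k] ((pT T hc r)^[k] (sig T r f y)) := by
    rw [← Function.iterate_add_apply]
    congr 1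
    omega
  rw [e1, hmerge, ← Function.iterate_add_apply, hy, ← Function.iterate_add_apply]
  congr 1
  omega

lemma par_chain (hk : 1 ≤ k) (a : V) (h2k : 2 * k ≤ T.dist a r) :
    par T ht.isConnected r f k a = chain T ht.isConnected r f k a (T.dist a r / k - 1) := by
  have hc := ht.isConnected
  have hq : 2 ≤ T.dist a r / k := (Nat.le_div_iff_mul_le (by omega)).mpr (by omega)
  rw [par, if_pos h2k, chain, if_neg (by omega)]
  congr 2
  have : (T.dist a r / k - 1) * k = (T.dist a r / k) * k - k := by
    rw [Nat.sub_mul, one_mul]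
  omega

lemma chain_step (hk : 1 ≤ k) (hsig : ∀ x : V, T.dist x (sig T r f x) ≤ k)
    (a : V) (j : ℕ) (hj : 1 ≤ j) (h : (j + 1) * k ≤ T.dist a r) :
    par T ht.isConnected r f k (chain T ht.isConnected r f k a (j + 1))
      = chain T ht.isConnected r f k a j := by
  have hc := ht.isConnected
  have hsucc : (j + 1) * k = j * k + k := by rw [Nat.succ_mul]
  have hlev := chain_level T ht r f k a (j + 1) (by omega) h
  set x := chain T ht.isConnected r f k a (j + 1) with hx
  have h2k : 2 * k ≤ T.dist x r := by
    rw [hlev]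
    have : 2 * k ≤ (j + 1) * k := Nat.mul_le_mul_right _ (by omega)
    omega
  rw [par, if_pos h2k, hlev]
  have hdivq : (j + 1) * k / k = j + 1 := Nat.mul_div_cancel _ (by omega)
  rw [hdivq]
  have hcount : (j + 1) * k - ((j + 1) * k - k) = k := by omega
  rw [hcount]
  have hxdef : x = sig T r f ((pT T hc r)^[T.dist a r - (j + 1) * k] a) := by
    rw [hx, chain, if_neg (by omega)]
  rw [hxdef]
  have := sig_iter_shift T ht r f k hk hsig a ((j + 1) * k) k h (le_refl k)
  rw [this]
  rw [chain, if_neg (by omega)]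
  congr 2
  omega

lemma chain_one_par (hk : 1 ≤ k) (a : V) (h : 1 * k ≤ T.dist a r) :
    par T ht.isConnected r f k (chain T ht.isConnected r f k a 1) = r := by
  have hlev := chain_level T ht r f k a 1 (le_refl 1) h
  rw [par, if_neg (by omega)]

lemma chain_top_par (hk : 1 ≤ k) (hsig : ∀ x : V, T.dist x (sig T r f x) ≤ k)
    (a : V) (h2k : 2 * k ≤ T.dist a r) :
    par T ht.isConnected r f k (chain T ht.isConnected r f k a (T.dist a r / k))
      = par T ht.isConnected r f k a := by
  have hc := ht.isConnected
  have hq : 2 ≤ T.dist a r / k := (Nat.le_div_iff_mul_le (by omega)).mpr (by omega)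
  have hqk : (T.dist a r / k) * k ≤ T.dist a r := Nat.div_mul_le_self _ _
  have hlev := chain_level T ht r f k a (T.dist a r / k) (by omega) hqk
  set q := T.dist a r / k with hqdef
  set x := chain T ht.isConnected r f k a q with hx
  have h2kx : 2 * k ≤ T.dist x r := by
    rw [hlev]
    calc 2 * k ≤ 2 * k * 1 := by omega
    _ ≤ k * q := by
        rw [two_mul]
        nlinarith [hq, hk]
    _ = q * k := Nat.mul_comm _ _
  rw [par, if_pos h2kx, hlev]
  have hdivq : q * k / k = q := Nat.mul_div_cancel _ (by omega)
  rw [hdivq]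
  have hcount : q * k - (q * k - k) = k := by
    have : 1 * k ≤ q * k := Nat.mul_le_mul_right _ (by omega)
    omega
  rw [hcount]
  have hxdef : x = sig T r f ((pT T hc r)^[T.dist a r - q * k] a) := by
    rw [hx, chain, if_neg (by omega)]
  rw [hxdef]
  have := sig_iter_shift T ht r f k hk hsig a (q * k) k hqk (le_refl k)
  rw [this]
  rw [par, if_pos h2k]
  congr 2
  rw [← hqdef]
  have h1k : 1 * k ≤ q * k := Nat.mul_le_mul_right _ (by omega)
  omega

end NewTree

section NewTree2

variable {J : Type v} [MetricSpace J]
variable (T : SimpleGraph V) (ht : T.IsTree) (r : V) (f : V → J) (k : ℕ)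

/-- the root of the new tree -/
noncomputable def root (hc : T.Connected) : Vfix T r f := ⟨r, sig_root T hc r f⟩

lemma adj_of_par {a b : Vfix T r f} (h : par T ht.isConnected r f k a.1 = b.1)
    (hne : a.1 ≠ b.1) : (Tnew T ht.isConnected r f k).Adj a b := by
  rw [Tnew, SimpleGraph.fromRel_adj]
  exact ⟨fun hab => hne (congrArg Subtype.val hab), Or.inl h⟩

lemma adj_cases (hk : 1 ≤ k) {a b : Vfix T r f}
    (h : (Tnew T ht.isConnected r f k).Adj a b) :
    (b.1 = par T ht.isConnected r f k a.1 ∧ T.dist b.1 r < T.dist a.1 r) ∨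
    (a.1 = par T ht.isConnected r f k b.1 ∧ T.dist a.1 r < T.dist b.1 r) := by
  rw [Tnew, SimpleGraph.fromRel_adj] at h
  obtain ⟨hne, h | h⟩ := h
  · left
    have har : a.1 ≠ r := by
      intro hr
      apply hne
      apply Subtype.ext
      rw [← h, hr, par_root T ht r f k]
    refine ⟨h.symm, ?_⟩
    rw [← h]
    exact par_level_lt T ht r f k hk a.1 har
  · right
    have hbr : b.1 ≠ r := by
      intro hr
      apply hne
      apply Subtype.ext
      rw [← h, hr, par_root T ht r f k]
    refine ⟨h.symm, ?_⟩
    rw [← h]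
    exact par_level_lt T ht r f k hk b.1 hbr

lemma adj_dist_le (hk : 1 ≤ k) (hsig : ∀ x : V, T.dist x (sig T r f x) ≤ k)
    {a b : Vfix T r f} (h : (Tnew T ht.isConnected r f k).Adj a b) :
    T.dist a.1 b.1 ≤ 3 * k := by
  rcases adj_cases T ht r f k hk h with ⟨h1, _⟩ | ⟨h1, _⟩
  · rw [h1]
    exact par_dist T ht r f k hk hsig a.1
  · rw [SimpleGraph.dist_comm, h1]
    exact par_dist T ht r f k hk hsig b.1

lemma reach_root (hk : 1 ≤ k) :
    ∀ a : Vfix T r f,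
      (Tnew T ht.isConnected r f k).Reachable a (root T r f ht.isConnected) := by
  suffices h : ∀ (n : ℕ) (a : Vfix T r f), T.dist a.1 r ≤ n →
      (Tnew T ht.isConnected r f k).Reachable a (root T r f ht.isConnected) by
    exact fun a => h (T.dist a.1 r) a le_rfl
  intro n
  induction n with
  | zero =>
    intro a ha
    have h0 : a.1 = r := ht.isConnected.dist_eq_zero_iff.mp (by omega)
    rw [show a = root T r f ht.isConnected from Subtype.ext h0]
  | succ n ih =>
    intro a ha
    by_cases har : a.1 = r
    · rw [show a = root T r f ht.isConnected from Subtype.ext har]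
    · refine SimpleGraph.Adj.reachable ?_ |>.trans
        (ih ⟨par T ht.isConnected r f k a.1, par_fixed T r f k ht.isConnected a.1⟩ ?_)
      · have hlt := par_level_lt T ht r f k hk a.1 har
        apply adj_of_par T ht r f k rfl
        intro h
        have := congrArg (fun z => T.dist z r) h
        simp only at this
        omega
      · show T.dist (par T ht.isConnected r f k a.1) r ≤ n
        have hlt := par_level_lt T ht r f k hk a.1 har
        omega

lemma tnew_connected (hk : 1 ≤ k) : (Tnew T ht.isConnected r f k).Connected := by
  rw [SimpleGraph.connected_iff]
  exact ⟨fun a b => ((reach_root T ht r f k hk) a).trans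
    ((reach_root T ht r f k hk) b).symm, ⟨root T r f ht.isConnected⟩⟩

lemma closed_support_not_nodup {W : Type*} {G : SimpleGraph W} {b : W}
    (p : G.Walk b b) (hp : ¬ p.Nil) : ¬ p.support.Nodup := by
  cases p with
  | nil => simp at hp
  | cons h3 p3 =>
    rw [SimpleGraph.Walk.support_cons, List.nodup_cons]
    intro hnd
    exact hnd.1 (SimpleGraph.Walk.end_mem_support p3)

lemma tnew_acyclic (hk : 1 ≤ k) : (Tnew T ht.isConnected r f k).IsAcyclic := by
  classical
  intro a0 c0 hcyc0
  obtain ⟨m, hm⟩ : ∃ m, m ∈ c0.support.argmax (fun z => T.dist z.1 r) := by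
    cases h : c0.support.argmax (fun z => T.dist z.1 r) with
    | none =>
      exfalso
      exact c0.support_ne_nil (List.argmax_eq_none.mp h)
    | some m => exact ⟨m, by simp [h]⟩
  have hmem : m ∈ c0.support := List.argmax_mem hm
  have hmax : ∀ y ∈ c0.support, T.dist y.1 r ≤ T.dist m.1 r :=
    fun y hy => List.le_of_mem_argmax hy hm
  have hcyc1 : (c0.rotate m hmem).IsCycle := hcyc0.rotate hmem
  have hmax1 : ∀ y ∈ (c0.rotate m hmem).support, T.dist y.1 r ≤ T.dist m.1 r := by
    intro y hy
    rcases (SimpleGraph.Walk.mem_support_iff (c0.rotate m hmem)).mp hy with rfl | hy'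
    · exact le_rfl
    · have hy2 := ((SimpleGraph.Walk.support_rotate c0 m hmem).mem_iff).mp hy'
      exact hmax y (List.mem_of_mem_tail hy2)
  revert hcyc1 hmax1
  generalize c0.rotate m hmem = c1
  intro hcyc1 hmax1
  have hlen3 : 3 ≤ c1.length := hcyc1.three_le_length
  cases c1 with
  | nil => simp at hlen3
  | cons hadj p =>
    rename_i b
    -- b.1 = par m.1
    have hbsup : b ∈ (SimpleGraph.Walk.cons hadj p).support := by
      rw [SimpleGraph.Walk.support_cons]
      exact List.mem_cons_of_mem _ (SimpleGraph.Walk.start_mem_support p)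
    have hb : b.1 = par T ht.isConnected r f k m.1 := by
      rcases adj_cases T ht r f k hk hadj with ⟨h1, _⟩ | ⟨_, h2⟩
      · exact h1
      · exact absurd (hmax1 b hbsup) (by omega)
    -- second vertex from the other side
    have hplen : 2 ≤ p.length := by
      rw [SimpleGraph.Walk.length_cons] at hlen3
      omega
    have hpnodup : p.support.Nodup := by
      have := hcyc1.support_nodup
      rwa [SimpleGraph.Walk.support_cons, List.tail_cons] at this
    cases hrev : p.reverse with
    | nil =>
      have h0 := congrArg SimpleGraph.Walk.length hrev
      rw [SimpleGraph.Walk.length_reverse, SimpleGraph.Walk.length_nil] at h0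
      omega
    | cons hadj2 p2 =>
      rename_i z
      have hzsup : z ∈ (SimpleGraph.Walk.cons hadj p).support := by
        have hz2 : z ∈ p.reverse.support := by
          rw [hrev, SimpleGraph.Walk.support_cons]
          exact List.mem_cons_of_mem _ (SimpleGraph.Walk.start_mem_support p2)
        rw [SimpleGraph.Walk.support_reverse, List.mem_reverse] at hz2
        rw [SimpleGraph.Walk.support_cons]
        exact List.mem_cons_of_mem _ hz2
      have hz : z.1 = par T ht.isConnected r f k m.1 := by
        rcases adj_cases T ht r f k hk hadj2 with ⟨h1, _⟩ | ⟨_, h2⟩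
        · exact h1
        · exact absurd (hmax1 z hzsup) (by omega)
      have hzb : z = b := Subtype.ext (by rw [hz, hb])
      subst hzb
      -- p2 is a closed walk of positive length
      have hp2len : 1 ≤ p2.length := by
        have := congrArg SimpleGraph.Walk.length hrev
        rw [SimpleGraph.Walk.length_reverse, SimpleGraph.Walk.length_cons] at this
        omega
      have hp2dup := closed_support_not_nodup p2
        (by rw [SimpleGraph.Walk.nil_iff_length_eq]; omega)
      -- but p.support is nodup
      have hps : p.support.reverse = m :: p2.support := by
        rw [← SimpleGraph.Walk.support_reverse, hrev, SimpleGraph.Walk.support_cons]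
      have : p2.support.Nodup := by
        have hnd : p.support.reverse.Nodup := List.nodup_reverse.mpr hpnodup
        rw [hps, List.nodup_cons] at hnd
        exact hnd.2
      exact hp2dup this

end NewTree2

section NewTree3

variable {J : Type v} [MetricSpace J]
variable (T : SimpleGraph V) (ht : T.IsTree) (r : V) (f : V → J) (k : ℕ)

lemma chain_vertex_fix (a : V) (j : ℕ) :
    sig T r f (chain T ht.isConnected r f k a j) = chain T ht.isConnected r f k a j :=
  chain_fixed T ht r f k a j

lemma dist_le_one_of_adj {W : Type*} {G : SimpleGraph W} {a b : W} (h : G.Adj a b) :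
    G.dist a b ≤ 1 := le_of_eq (SimpleGraph.dist_eq_one_iff_adj.mpr h)

lemma chain_dist (hk : 1 ≤ k) (hsig : ∀ x : V, T.dist x (sig T r f x) ≤ k) :
    ∀ (a : Vfix T r f) (j : ℕ), j ≤ T.dist a.1 r / k →
      (Tnew T ht.isConnected r f k).dist a
        ⟨chain T ht.isConnected r f k a.1 j, chain_fixed T ht r f k a.1 j⟩
        ≤ T.dist a.1 r / k + 2 - j := by
  have hc := ht.isConnected
  have hconn := tnew_connected T ht r f k hk
  suffices H : ∀ (n : ℕ) (a : Vfix T r f), T.dist a.1 r ≤ n → ∀ (j : ℕ),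
      j ≤ T.dist a.1 r / k →
      (Tnew T ht.isConnected r f k).dist a
        ⟨chain T ht.isConnected r f k a.1 j, chain_fixed T ht r f k a.1 j⟩
        ≤ T.dist a.1 r / k + 2 - j by
    exact fun a j hj => H (T.dist a.1 r) a le_rfl j hj
  intro n
  induction n using Nat.strong_induction_on with
  | _ n IH =>
  intro a han j hj
  by_cases h2k : 2 * k ≤ T.dist a.1 r
  · -- main case
    have har : a.1 ≠ r := by
      intro hr
      have : T.dist a.1 r = 0 := by rw [hr]; exact SimpleGraph.dist_self
      omega
    have hq2 : 2 ≤ T.dist a.1 r / k := (Nat.le_div_iff_mul_le (by omega)).mpr (by omega)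
    set q := T.dist a.1 r / k with hqdef
    set b : Vfix T r f :=
      ⟨par T ht.isConnected r f k a.1, par_fixed T r f k ht.isConnected a.1⟩ with hbdef
    have hb1 : b.1 = par T ht.isConnected r f k a.1 := rfl
    have hblev : T.dist b.1 r = q * k - k := by
      rw [hb1, par_level T ht r f k hk a.1 h2k]
    have hblt : T.dist b.1 r < T.dist a.1 r := by
      rw [hb1]; exact par_level_lt T ht r f k hk a.1 har
    have hsubmul : (q - 1) * k = q * k - k := by rw [Nat.sub_mul, one_mul]
    have hqk_le : q * k ≤ T.dist a.1 r := Nat.div_mul_le_self _ _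
    have h1k_le : 1 * k ≤ q * k := Nat.mul_le_mul_right _ (by omega)
    have h2k_le : 2 * k ≤ q * k := Nat.mul_le_mul_right _ (by omega)
    have hbq : T.dist b.1 r / k = q - 1 := by
      rw [hblev, ← hsubmul]
      exact Nat.mul_div_cancel _ (by omega)
    have hanb : T.dist b.1 r ≤ n := by omega
    have hne_ab : a ≠ b := by
      intro h
      rw [h] at hblt
      omega
    have hadj_ab : (Tnew T ht.isConnected r f k).Adj a b :=
      adj_of_par T ht r f k hb1.symm (fun h => hne_ab (Subtype.ext h))
    have hdab : (Tnew T ht.isConnected r f k).dist a b ≤ 1 := dist_le_one_of_adj hadj_ab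
    rcases Nat.lt_or_ge j (q - 1) with hjlt | hjge
    · -- j ≤ q - 2 : go through b
      have hchain_eq : chain T ht.isConnected r f k b.1 j = chain T ht.isConnected r f k a.1 j := by
        by_cases hj0 : j = 0
        · rw [hj0, chain, if_pos rfl, chain, if_pos rfl]
        · rw [chain, if_neg hj0, chain, if_neg hj0]
          have hb1' : b.1 = sig T r f
              ((pT T ht.isConnected r)^[T.dist a.1 r - (q * k - k)] a.1) := by
            rw [hb1, par, if_pos h2k, ← hqdef]
          have hjk_le : j * k + k ≤ (q - 1) * k := by
            have h5 : (j + 1) * k ≤ (q - 1) * k := Nat.mul_le_mul_right _ (by omega)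
            rw [Nat.succ_mul] at h5
            omega
          have hshift := sig_iter_shift T ht r f k hk hsig a.1 (q * k - k)
            (T.dist b.1 r - j * k) (by omega) (by omega)
          rw [← hb1'] at hshift
          rw [hshift]
          congr 2
          omega
      have hIH := IH (T.dist b.1 r) (by omega) b le_rfl j (by omega)
      rw [hbq] at hIH
      have htri := hconn.dist_triangle (u := a) (v := b)
        (w := ⟨chain T ht.isConnected r f k a.1 j, chain_fixed T ht r f k a.1 j⟩)
      have hEQ : (⟨chain T ht.isConnected r f k b.1 j, chain_fixed T ht r f k b.1 j⟩ :
          Vfix T r f) = ⟨chain T ht.isConnected r f k a.1 j, chain_fixed T ht r f k a.1 j⟩ :=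
        Subtype.ext hchain_eq
      rw [hEQ] at hIH
      omega
    · rcases Nat.lt_or_ge j q with hjq | hjq
      · -- j = q - 1 : the chain vertex is b itself
        have hjq1 : j = q - 1 := by omega
        have hchain_b : chain T ht.isConnected r f k a.1 j = b.1 := by
          rw [hjq1, ← par_chain T ht r f k hk a.1 h2k, hb1]
        have hEQ : (⟨chain T ht.isConnected r f k a.1 j, chain_fixed T ht r f k a.1 j⟩ :
            Vfix T r f) = b := Subtype.ext hchain_b
        rw [hEQ]
        omega
      · -- j = q
        have hjq1 : j = q := by omega
        set x : Vfix T r f :=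
          ⟨chain T ht.isConnected r f k a.1 j, chain_fixed T ht r f k a.1 j⟩ with hxdef
        have hxlev : T.dist x.1 r = q * k := by
          rw [hxdef]
          show T.dist (chain T ht.isConnected r f k a.1 j) r = q * k
          rw [hjq1]
          exact chain_level T ht r f k a.1 q (by omega) hqk_le
        have hxpar : par T ht.isConnected r f k x.1 = b.1 := by
          rw [hb1]
          show par T ht.isConnected r f k (chain T ht.isConnected r f k a.1 j) = _
          rw [hjq1]
          exact chain_top_par T ht r f k hk hsig a.1 h2k
        have hxb : x ≠ b := by
          intro h
          have h6 : T.dist x.1 r = T.dist b.1 r := by rw [h]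
          omega
        have hadj_xb : (Tnew T ht.isConnected r f k).Adj x b :=
          adj_of_par T ht r f k hxpar (fun h => hxb (Subtype.ext h))
        have htri := hconn.dist_triangle (u := a) (v := b) (w := x)
        have hdbx : (Tnew T ht.isConnected r f k).dist b x ≤ 1 := by
          rw [SimpleGraph.dist_comm]
          exact dist_le_one_of_adj hadj_xb
        omega
  · -- small case : level < 2k
    have hq1 : T.dist a.1 r / k ≤ 1 := by
      by_contra hq
      have : 2 ≤ T.dist a.1 r / k := by omega
      have := (Nat.le_div_iff_mul_le (by omega : 0 < k)).mp this
      omega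
    set Root : Vfix T r f := root T r f ht.isConnected with hRdef
    have hR1 : Root.1 = r := rfl
    have hdaR : (Tnew T ht.isConnected r f k).dist a Root ≤ 1 := by
      by_cases har : a.1 = r
      · have : a = Root := Subtype.ext har
        rw [this, SimpleGraph.dist_self]
        omega
      · have hpar : par T ht.isConnected r f k a.1 = Root.1 := by
          rw [hR1, par, if_neg h2k]
        exact dist_le_one_of_adj (adj_of_par T ht r f k hpar (by rw [hR1]; exact har))
    by_cases hj0 : j = 0
    · have hch : chain T ht.isConnected r f k a.1 j = r := by
        rw [hj0, chain, if_pos rfl]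
      have hEQ : (⟨chain T ht.isConnected r f k a.1 j, chain_fixed T ht r f k a.1 j⟩ :
          Vfix T r f) = Root := Subtype.ext hch
      rw [hEQ]
      omega
    · -- j = 1
      have hj1 : j = 1 := by omega
      subst hj1
      have hkle : 1 * k ≤ T.dist a.1 r := by
        have h5 : 1 ≤ T.dist a.1 r / k := by omega
        have := (Nat.le_div_iff_mul_le (by omega : 0 < k)).mp h5
        omega
      set x : Vfix T r f :=
        ⟨chain T ht.isConnected r f k a.1 1, chain_fixed T ht r f k a.1 1⟩ with hxdef
      have hxlev : T.dist x.1 r = 1 * k := chain_level T ht r f k a.1 1 le_rfl hkle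
      have hdRx : (Tnew T ht.isConnected r f k).dist Root x ≤ 1 := by
        have hxpar : par T ht.isConnected r f k x.1 = Root.1 := by
          rw [hR1]
          exact chain_one_par T ht r f k hk a.1 hkle
        have hxR : x ≠ Root := by
          intro h
          have h6 : T.dist x.1 r = T.dist Root.1 r := by rw [h]
          have h0 : T.dist r r = 0 := SimpleGraph.dist_self
          rw [hxlev] at h6
          rw [hR1] at h6
          omega
        rw [SimpleGraph.dist_comm]
        exact dist_le_one_of_adj (adj_of_par T ht r f k hxpar (fun h => hxR (Subtype.ext h)))
      have htri := hconn.dist_triangle (u := a) (v := Root) (w := x)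
      omega

end NewTree3

section NewTree4

variable {J : Type v} [MetricSpace J]
variable (T : SimpleGraph V) (ht : T.IsTree) (r : V) (f : V → J) (k : ℕ)

/-- upper bound for the new-tree distance -/
lemma tnew_dist_le (hk : 1 ≤ k) (hsig : ∀ x : V, T.dist x (sig T r f x) ≤ k)
    (a b : Vfix T r f) :
    (Tnew T ht.isConnected r f k).dist a b ≤ T.dist a.1 b.1 / k + 7 := by
  have hc := ht.isConnected
  have hconn := tnew_connected T ht r f k hk
  have hdtri : T.dist a.1 b.1 ≤ T.dist a.1 r + T.dist b.1 r := by
    have h1 : T.dist a.1 b.1 ≤ T.dist a.1 r + T.dist r b.1 := hc.dist_triangle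
    have h2 : T.dist r b.1 = T.dist b.1 r := SimpleGraph.dist_comm
    omega
  have hlbtri : T.dist b.1 r ≤ T.dist a.1 r + T.dist a.1 b.1 := by
    have h1 : T.dist b.1 r ≤ T.dist b.1 a.1 + T.dist a.1 r := hc.dist_triangle
    have h2 : T.dist b.1 a.1 = T.dist a.1 b.1 := SimpleGraph.dist_comm
    omega
  have hlatri : T.dist a.1 r ≤ T.dist b.1 r + T.dist a.1 b.1 := by
    have h1 : T.dist a.1 r ≤ T.dist a.1 b.1 + T.dist b.1 r := hc.dist_triangle
    omega
  have hj0s : (min ((T.dist a.1 r + T.dist b.1 r - T.dist a.1 b.1) / (2 * k)) (min (T.dist a.1 r / k) (T.dist b.1 r / k))) ≤ ((T.dist a.1 r + T.dist b.1 r - T.dist a.1 b.1) / (2 * k)) := min_le_left _ _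
  have hj0a : (min ((T.dist a.1 r + T.dist b.1 r - T.dist a.1 b.1) / (2 * k)) (min (T.dist a.1 r / k) (T.dist b.1 r / k))) ≤ (T.dist a.1 r / k) := le_trans (min_le_right _ _) (min_le_left _ _)
  have hj0b : (min ((T.dist a.1 r + T.dist b.1 r - T.dist a.1 b.1) / (2 * k)) (min (T.dist a.1 r / k) (T.dist b.1 r / k))) ≤ (T.dist b.1 r / k) := le_trans (min_le_right _ _) (min_le_right _ _)
  have hqak : (T.dist a.1 r / k) * k ≤ T.dist a.1 r := Nat.div_mul_le_self _ _
  have hqbk : (T.dist b.1 r / k) * k ≤ T.dist b.1 r := Nat.div_mul_le_self _ _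
  have hs'k : ((T.dist a.1 r + T.dist b.1 r - T.dist a.1 b.1) / (2 * k)) * (2 * k) ≤ T.dist a.1 r + T.dist b.1 r - T.dist a.1 b.1 := Nat.div_mul_le_self _ _
  have hj0k_a : (min ((T.dist a.1 r + T.dist b.1 r - T.dist a.1 b.1) / (2 * k)) (min (T.dist a.1 r / k) (T.dist b.1 r / k))) * k ≤ T.dist a.1 r := le_trans (Nat.mul_le_mul_right _ hj0a) hqak
  have hj0k_b : (min ((T.dist a.1 r + T.dist b.1 r - T.dist a.1 b.1) / (2 * k)) (min (T.dist a.1 r / k) (T.dist b.1 r / k))) * k ≤ T.dist b.1 r := le_trans (Nat.mul_le_mul_right _ hj0b) hqbk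
  have hchain_eq : chain T ht.isConnected r f k a.1 (min ((T.dist a.1 r + T.dist b.1 r - T.dist a.1 b.1) / (2 * k)) (min (T.dist a.1 r / k) (T.dist b.1 r / k))) = chain T ht.isConnected r f k b.1 (min ((T.dist a.1 r + T.dist b.1 r - T.dist a.1 b.1) / (2 * k)) (min (T.dist a.1 r / k) (T.dist b.1 r / k))) := by
    by_cases hj00 : (min ((T.dist a.1 r + T.dist b.1 r - T.dist a.1 b.1) / (2 * k)) (min (T.dist a.1 r / k) (T.dist b.1 r / k))) = 0
    · rw [hj00, chain, if_pos rfl, chain, if_pos rfl]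
    · rw [chain, if_neg hj00, chain, if_neg hj00]
      have hca := common_ancestor T ht r a.1 b.1 ((min ((T.dist a.1 r + T.dist b.1 r - T.dist a.1 b.1) / (2 * k)) (min (T.dist a.1 r / k) (T.dist b.1 r / k))) * k) hj0k_a hj0k_b (by
        have h1 : (min ((T.dist a.1 r + T.dist b.1 r - T.dist a.1 b.1) / (2 * k)) (min (T.dist a.1 r / k) (T.dist b.1 r / k))) * (2 * k) ≤ ((T.dist a.1 r + T.dist b.1 r - T.dist a.1 b.1) / (2 * k)) * (2 * k) := Nat.mul_le_mul_right _ hj0s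
        have h2 : (min ((T.dist a.1 r + T.dist b.1 r - T.dist a.1 b.1) / (2 * k)) (min (T.dist a.1 r / k) (T.dist b.1 r / k))) * (2 * k) = 2 * ((min ((T.dist a.1 r + T.dist b.1 r - T.dist a.1 b.1) / (2 * k)) (min (T.dist a.1 r / k) (T.dist b.1 r / k))) * k) := by ring
        omega)
      rw [hca]
  have hda := chain_dist T ht r f k hk hsig a (min ((T.dist a.1 r + T.dist b.1 r - T.dist a.1 b.1) / (2 * k)) (min (T.dist a.1 r / k) (T.dist b.1 r / k))) hj0a
  have hdb := chain_dist T ht r f k hk hsig b (min ((T.dist a.1 r + T.dist b.1 r - T.dist a.1 b.1) / (2 * k)) (min (T.dist a.1 r / k) (T.dist b.1 r / k))) hj0b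
  have hEQ : (⟨chain T ht.isConnected r f k a.1 (min ((T.dist a.1 r + T.dist b.1 r - T.dist a.1 b.1) / (2 * k)) (min (T.dist a.1 r / k) (T.dist b.1 r / k))), chain_fixed T ht r f k a.1 (min ((T.dist a.1 r + T.dist b.1 r - T.dist a.1 b.1) / (2 * k)) (min (T.dist a.1 r / k) (T.dist b.1 r / k)))⟩ :
      Vfix T r f) = ⟨chain T ht.isConnected r f k b.1 (min ((T.dist a.1 r + T.dist b.1 r - T.dist a.1 b.1) / (2 * k)) (min (T.dist a.1 r / k) (T.dist b.1 r / k))), chain_fixed T ht r f k b.1 (min ((T.dist a.1 r + T.dist b.1 r - T.dist a.1 b.1) / (2 * k)) (min (T.dist a.1 r / k) (T.dist b.1 r / k)))⟩ :=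
    Subtype.ext hchain_eq
  rw [hEQ] at hda
  have htri := hconn.dist_triangle (u := a)
    (v := (⟨chain T ht.isConnected r f k b.1 (min ((T.dist a.1 r + T.dist b.1 r - T.dist a.1 b.1) / (2 * k)) (min (T.dist a.1 r / k) (T.dist b.1 r / k))), chain_fixed T ht r f k b.1 (min ((T.dist a.1 r + T.dist b.1 r - T.dist a.1 b.1) / (2 * k)) (min (T.dist a.1 r / k) (T.dist b.1 r / k)))⟩ : Vfix T r f))
    (w := b)
  have hsym : (Tnew T ht.isConnected r f k).dist
      (⟨chain T ht.isConnected r f k b.1 (min ((T.dist a.1 r + T.dist b.1 r - T.dist a.1 b.1) / (2 * k)) (min (T.dist a.1 r / k) (T.dist b.1 r / k))), chain_fixed T ht r f k b.1 (min ((T.dist a.1 r + T.dist b.1 r - T.dist a.1 b.1) / (2 * k)) (min (T.dist a.1 r / k) (T.dist b.1 r / k)))⟩ : Vfix T r f) b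
      = (Tnew T ht.isConnected r f k).dist b
      (⟨chain T ht.isConnected r f k b.1 (min ((T.dist a.1 r + T.dist b.1 r - T.dist a.1 b.1) / (2 * k)) (min (T.dist a.1 r / k) (T.dist b.1 r / k))), chain_fixed T ht r f k b.1 (min ((T.dist a.1 r + T.dist b.1 r - T.dist a.1 b.1) / (2 * k)) (min (T.dist a.1 r / k) (T.dist b.1 r / k)))⟩ : Vfix T r f) :=
    SimpleGraph.dist_comm
  have hdk : (T.dist a.1 b.1 / k) * k ≤ T.dist a.1 b.1 := Nat.div_mul_le_self _ _
  have hdk2 : T.dist a.1 b.1 < (T.dist a.1 b.1 / k) * k + k := by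
    have h1 := Nat.div_add_mod (T.dist a.1 b.1) k
    have h2 := Nat.mod_lt (T.dist a.1 b.1) (show 0 < k by omega)
    have hco : k * (T.dist a.1 b.1 / k) = (T.dist a.1 b.1 / k) * k := Nat.mul_comm _ _
    omega
  have hlak : T.dist a.1 r < (T.dist a.1 r / k) * k + k := by
    have h1 := Nat.div_add_mod (T.dist a.1 r) k
    have h2 := Nat.mod_lt (T.dist a.1 r) (show 0 < k by omega)
    have hco : k * (T.dist a.1 r / k) = (T.dist a.1 r / k) * k := Nat.mul_comm _ _
    omega
  have hlbk : T.dist b.1 r < (T.dist b.1 r / k) * k + k := by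
    have h1 := Nat.div_add_mod (T.dist b.1 r) k
    have h2 := Nat.mod_lt (T.dist b.1 r) (show 0 < k by omega)
    have hco : k * (T.dist b.1 r / k) = (T.dist b.1 r / k) * k := Nat.mul_comm _ _
    omega
  have hmk : T.dist a.1 r + T.dist b.1 r - T.dist a.1 b.1 < ((T.dist a.1 r + T.dist b.1 r - T.dist a.1 b.1) / (2 * k)) * (2 * k) + 2 * k := by
    have h1 := Nat.div_add_mod (T.dist a.1 r + T.dist b.1 r - T.dist a.1 b.1) (2 * k)
    have h2 := Nat.mod_lt (T.dist a.1 r + T.dist b.1 r - T.dist a.1 b.1) (show 0 < 2 * k by omega)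
    have hco : (2 * k) * ((T.dist a.1 r + T.dist b.1 r - T.dist a.1 b.1) / (2 * k)) = ((T.dist a.1 r + T.dist b.1 r - T.dist a.1 b.1) / (2 * k)) * (2 * k) := Nat.mul_comm _ _
    omega
  have key1 : (T.dist a.1 r / k) + (T.dist b.1 r / k) < 2 * ((T.dist a.1 r + T.dist b.1 r - T.dist a.1 b.1) / (2 * k)) + T.dist a.1 b.1 / k + 3 := by
    have h1 : k * ((T.dist a.1 r / k) + (T.dist b.1 r / k)) < k * (2 * ((T.dist a.1 r + T.dist b.1 r - T.dist a.1 b.1) / (2 * k)) + T.dist a.1 b.1 / k + 3) := by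
      have e1 : k * ((T.dist a.1 r / k) + (T.dist b.1 r / k)) = (T.dist a.1 r / k) * k + (T.dist b.1 r / k) * k := by ring
      have e2 : k * (2 * ((T.dist a.1 r + T.dist b.1 r - T.dist a.1 b.1) / (2 * k)) + T.dist a.1 b.1 / k + 3) = ((T.dist a.1 r + T.dist b.1 r - T.dist a.1 b.1) / (2 * k)) * (2 * k) + (T.dist a.1 b.1 / k) * k + 3 * k := by ring
      omega
    exact Nat.lt_of_mul_lt_mul_left h1
  have key2 : (T.dist b.1 r / k) < (T.dist a.1 r / k) + T.dist a.1 b.1 / k + 2 := by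
    have h1 : k * (T.dist b.1 r / k) < k * ((T.dist a.1 r / k) + T.dist a.1 b.1 / k + 2) := by
      have e1 : k * (T.dist b.1 r / k) = (T.dist b.1 r / k) * k := by ring
      have e2 : k * ((T.dist a.1 r / k) + T.dist a.1 b.1 / k + 2) = (T.dist a.1 r / k) * k + (T.dist a.1 b.1 / k) * k + 2 * k := by ring
      omega
    exact Nat.lt_of_mul_lt_mul_left h1
  have key3 : (T.dist a.1 r / k) < (T.dist b.1 r / k) + T.dist a.1 b.1 / k + 2 := by
    have h1 : k * (T.dist a.1 r / k) < k * ((T.dist b.1 r / k) + T.dist a.1 b.1 / k + 2) := by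
      have e1 : k * (T.dist a.1 r / k) = (T.dist a.1 r / k) * k := by ring
      have e2 : k * ((T.dist b.1 r / k) + T.dist a.1 b.1 / k + 2) = (T.dist b.1 r / k) * k + (T.dist a.1 b.1 / k) * k + 2 * k := by ring
      omega
    exact Nat.lt_of_mul_lt_mul_left h1
  have hcases : (min ((T.dist a.1 r + T.dist b.1 r - T.dist a.1 b.1) / (2 * k)) (min (T.dist a.1 r / k) (T.dist b.1 r / k))) = ((T.dist a.1 r + T.dist b.1 r - T.dist a.1 b.1) / (2 * k)) ∨ (min ((T.dist a.1 r + T.dist b.1 r - T.dist a.1 b.1) / (2 * k)) (min (T.dist a.1 r / k) (T.dist b.1 r / k))) = (T.dist a.1 r / k) ∨ (min ((T.dist a.1 r + T.dist b.1 r - T.dist a.1 b.1) / (2 * k)) (min (T.dist a.1 r / k) (T.dist b.1 r / k))) = (T.dist b.1 r / k) := by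
    rcases Nat.le_total ((T.dist a.1 r + T.dist b.1 r - T.dist a.1 b.1) / (2 * k)) (min (T.dist a.1 r / k) (T.dist b.1 r / k)) with h | h
    · left; rw [min_eq_left h]
    · rcases Nat.le_total (T.dist a.1 r / k) (T.dist b.1 r / k) with h2 | h2
      · right; left; rw [min_eq_right h, min_eq_left h2]
      · right; right; rw [min_eq_right h, min_eq_right h2]
  rcases hcases with hcc | hcc | hcc <;> omega

/-- lower bound : each edge moves at most 3k -/
lemma tnew_walk_dist (hk : 1 ≤ k) (hsig : ∀ x : V, T.dist x (sig T r f x) ≤ k) :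
    ∀ (a b : Vfix T r f) (w : (Tnew T ht.isConnected r f k).Walk a b),
      T.dist a.1 b.1 ≤ 3 * k * w.length := by
  intro a b w
  induction w with
  | nil =>
    rw [SimpleGraph.dist_self]
    omega
  | @cons u' v' w' hadj p ih =>
    have h1 : T.dist u'.1 w'.1 ≤ T.dist u'.1 v'.1 + T.dist v'.1 w'.1 :=
      ht.isConnected.dist_triangle
    have h2 : T.dist u'.1 v'.1 ≤ 3 * k := adj_dist_le T ht r f k hk hsig hadj
    rw [SimpleGraph.Walk.length_cons]
    have h3 : 3 * k * (p.length + 1) = 3 * k * p.length + 3 * k := by ring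
    omega

lemma tnew_dist_ge (hk : 1 ≤ k) (hsig : ∀ x : V, T.dist x (sig T r f x) ≤ k)
    (a b : Vfix T r f) :
    T.dist a.1 b.1 ≤ 3 * k * (Tnew T ht.isConnected r f k).dist a b := by
  obtain ⟨w, hw⟩ := (tnew_connected T ht r f k hk).exists_walk_length_eq_dist a b
  rw [← hw]
  exact tnew_walk_dist T ht r f k hk hsig a b w

end NewTree4

section Neighbors

variable {J : Type v} [MetricSpace J]
variable (T : SimpleGraph V) (ht : T.IsTree) (r : V) (f : V → J) (k : ℕ)

lemma tnew_neighbor_bound (hk : 1 ≤ k) (hsig : ∀ x : V, T.dist x (sig T r f x) ≤ k)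
    (R : ℝ) (hR : ∀ u w : V, T.dist u w ≤ 3 * k → dist (f u) (f w) ≤ R)
    (C : ℕ) (t : Vfix T r f)
    (hfin : (Metric.closedBall (f t.1) R).Finite)
    (hcard : (Metric.closedBall (f t.1) R).ncard ≤ C) :
    ((Tnew T ht.isConnected r f k).neighborSet t).Finite ∧
      ((Tnew T ht.isConnected r f k).neighborSet t).ncard ≤ C * (6 * k + 1) := by
  classical
  set N := (Tnew T ht.isConnected r f k).neighborSet t with hN
  set φ : Vfix T r f → J × ℕ := fun s => (f s.1, T.dist s.1 r) with hφ
  have hinj : Set.InjOn φ N := by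
    intro s1 _ s2 _ h
    have h1 : f s1.1 = f s2.1 := congrArg Prod.fst h
    have h2 : T.dist s1.1 r = T.dist s2.1 r := congrArg Prod.snd h
    exact Subtype.ext (sig_fixed_inj T r f s1.2 s2.2 h1 h2)
  set F : Finset (J × ℕ) :=
    hfin.toFinset ×ˢ Finset.Icc (T.dist t.1 r - 3 * k) (T.dist t.1 r + 3 * k) with hF
  have hsubN : φ '' N ⊆ ↑F := by
    rintro p ⟨s, hs, rfl⟩
    have hadj : (Tnew T ht.isConnected r f k).Adj t s := hs
    have hdist : T.dist t.1 s.1 ≤ 3 * k := adj_dist_le T ht r f k hk hsig hadj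
    have hdist' : T.dist s.1 t.1 = T.dist t.1 s.1 := SimpleGraph.dist_comm
    simp only [hF, Finset.coe_product, Set.mem_prod, Finset.mem_coe, Set.Finite.mem_toFinset,
      Finset.mem_Icc]
    constructor
    · rw [Metric.mem_closedBall]
      exact hR s.1 t.1 (by omega)
    · have h1 : T.dist s.1 r ≤ T.dist s.1 t.1 + T.dist t.1 r := ht.isConnected.dist_triangle
      have h2 : T.dist t.1 r ≤ T.dist t.1 s.1 + T.dist s.1 r := ht.isConnected.dist_triangle
      have h3 : (φ s).2 = T.dist s.1 r := rfl
      omega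
  have hNfin : N.Finite := by
    apply Set.Finite.of_finite_image _ hinj
    exact Set.Finite.subset F.finite_toSet hsubN
  refine ⟨hNfin, ?_⟩
  have h1 : N.ncard = (φ '' N).ncard := (Set.ncard_image_of_injOn hinj).symm
  have h2 : (φ '' N).ncard ≤ (↑F : Set (J × ℕ)).ncard :=
    Set.ncard_le_ncard hsubN F.finite_toSet
  have h3 : (↑F : Set (J × ℕ)).ncard = F.card := Set.ncard_coe_finset F
  have h4 : F.card = hfin.toFinset.card *
      (Finset.Icc (T.dist t.1 r - 3 * k) (T.dist t.1 r + 3 * k)).card := Finset.card_product _ _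
  have h5 : (Metric.closedBall (f t.1) R).ncard = hfin.toFinset.card :=
    Set.ncard_eq_toFinset_card _ hfin
  have h6 : (Finset.Icc (T.dist t.1 r - 3 * k) (T.dist t.1 r + 3 * k)).card ≤ 6 * k + 1 := by
    rw [Nat.card_Icc]
    omega
  have h7 : hfin.toFinset.card ≤ C := by
    rw [← h5]
    exact hcard
  calc N.ncard = (φ '' N).ncard := h1
    _ ≤ (↑F : Set (J × ℕ)).ncard := h2
    _ = F.card := h3
    _ ≤ C * (6 * k + 1) := by
        rw [h4]
        exact Nat.mul_le_mul h7 h6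

end Neighbors

end QITAux

/-- **Implication (1b) ⇒ (1) of Theorem `cqia`.** If a metric space `J` with uniformly finite
balls is quasi-isometric to a tree, then it is quasi-isometric to a tree of bounded
valency. -/
theorem quasiIsometric_to_bounded_valency_tree
    (T : SimpleGraph V) (htree : T.IsTree) [MetricSpace J]
    (hballs : ∀ r : ℝ, ∃ C : ℕ, ∀ x : J,
      (Metric.closedBall x r).Finite ∧ (Metric.closedBall x r).ncard ≤ C)
    (f : V → J) (hf : IsGraphQuasiIsometry T f) :
    ∃ (V'' : Type u) (T'' : SimpleGraph V''), T''.IsTree ∧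
      (∃ D : ℕ, ∀ v : V'', (T''.neighborSet v).Finite ∧ (T''.neighborSet v).ncard ≤ D) ∧
      ∃ f'' : V'' → J, IsGraphQuasiIsometry T'' f'' := by
  classical
  obtain ⟨μ, α, hμ, hα, hpair, hcover⟩ := hf
  obtain ⟨r⟩ : Nonempty V := htree.isConnected.nonempty
  set k : ℕ := ⌈μ * α⌉₊ + 1 with hkdef
  have hk : 1 ≤ k := by omega
  have hμ0 : (0:ℝ) < μ := by linarith
  have hk1 : (1:ℝ) ≤ (k:ℝ) := by exact_mod_cast hk
  have hsig : ∀ x : V, T.dist x (QITAux.sig T r f x) ≤ k := by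
    intro x
    have hfx : f (QITAux.sig T r f x) = f x := (QITAux.sig_spec T r f x).1
    have hlow := (hpair x (QITAux.sig T r f x)).1
    rw [hfx, dist_self] at hlow
    have hd : (T.dist x (QITAux.sig T r f x) : ℝ) ≤ μ * α := by
      have h2 : (1 / μ) * (T.dist x (QITAux.sig T r f x) : ℝ) ≤ α := by linarith
      have h3 : μ * ((1 / μ) * (T.dist x (QITAux.sig T r f x) : ℝ)) ≤ μ * α :=
        mul_le_mul_of_nonneg_left h2 (le_of_lt hμ0)
      rw [← mul_assoc, mul_one_div, div_self (ne_of_gt hμ0), one_mul] at h3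
      exact h3
    have hd2 : (T.dist x (QITAux.sig T r f x) : ℝ) ≤ (⌈μ * α⌉₊ : ℝ) :=
      le_trans hd (Nat.le_ceil _)
    have hd3 : T.dist x (QITAux.sig T r f x) ≤ ⌈μ * α⌉₊ := by exact_mod_cast hd2
    omega
  set R : ℝ := μ * (3 * k) + α with hRdef
  obtain ⟨C, hC⟩ := hballs R
  have hRbound : ∀ u w : V, T.dist u w ≤ 3 * k → dist (f u) (f w) ≤ R := by
    intro u w h
    have h1 := (hpair u w).2
    have h2 : (T.dist u w : ℝ) ≤ (3 * k : ℕ) := by exact_mod_cast h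
    have h3 : μ * (T.dist u w : ℝ) ≤ μ * (3 * k : ℕ) :=
      mul_le_mul_of_nonneg_left h2 (le_of_lt hμ0)
    have h4 : ((3 * k : ℕ) : ℝ) = 3 * (k : ℝ) := by push_cast; ring
    rw [hRdef]
    rw [h4] at h3
    linarith
  refine ⟨QITAux.Vfix T r f, QITAux.Tnew T htree.isConnected r f k,
    ⟨QITAux.tnew_connected T htree r f k hk, QITAux.tnew_acyclic T htree r f k hk⟩,
    ⟨C * (6 * k + 1), fun t => ?_⟩,
    (fun a => f a.1), 3 * (k : ℝ) * μ, α + 7, ?_, by linarith, ?_, ?_⟩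
  · exact QITAux.tnew_neighbor_bound T htree r f k hk hsig R hRbound C t
      (hC (f t.1)).1 (hC (f t.1)).2
  · nlinarith
  · intro a b
    have hub := QITAux.tnew_dist_le T htree r f k hk hsig a b
    have hlb := QITAux.tnew_dist_ge T htree r f k hk hsig a b
    have hub2 : (QITAux.Tnew T htree.isConnected r f k).dist a b ≤ T.dist a.1 b.1 + 7 := by
      have := Nat.div_le_self (T.dist a.1 b.1) k
      omega
    have hub2r : ((QITAux.Tnew T htree.isConnected r f k).dist a b : ℝ)
        ≤ (T.dist a.1 b.1 : ℝ) + 7 := by exact_mod_cast hub2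
    have hlbr : (T.dist a.1 b.1 : ℝ)
        ≤ 3 * (k:ℝ) * ((QITAux.Tnew T htree.isConnected r f k).dist a b : ℝ) := by
      have h0 : ((3 * k * (QITAux.Tnew T htree.isConnected r f k).dist a b : ℕ) : ℝ)
          = 3 * (k:ℝ) * ((QITAux.Tnew T htree.isConnected r f k).dist a b : ℝ) := by
        push_cast; ring
      rw [← h0]
      exact_mod_cast hlb
    have hpl := (hpair a.1 b.1).1
    have hpu := (hpair a.1 b.1).2
    have hTd0 : (0:ℝ) ≤ ((QITAux.Tnew T htree.isConnected r f k).dist a b : ℝ) :=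
      Nat.cast_nonneg _
    have hdT0 : (0:ℝ) ≤ (T.dist a.1 b.1 : ℝ) := Nat.cast_nonneg _
    constructor
    · -- lower bound
      have key1 : (1 / (3 * (k:ℝ) * μ)) * ((QITAux.Tnew T htree.isConnected r f k).dist a b : ℝ)
          ≤ (1 / μ) * ((QITAux.Tnew T htree.isConnected r f k).dist a b : ℝ) := by
        apply mul_le_mul_of_nonneg_right _ hTd0
        apply one_div_le_one_div_of_le hμ0
        nlinarith
      have key2 : (1 / μ) * ((QITAux.Tnew T htree.isConnected r f k).dist a b : ℝ)
          ≤ (1 / μ) * (T.dist a.1 b.1 : ℝ) + 7 := by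
        have h5 : (1 / μ) * ((QITAux.Tnew T htree.isConnected r f k).dist a b : ℝ)
            ≤ (1 / μ) * ((T.dist a.1 b.1 : ℝ) + 7) := by
          apply mul_le_mul_of_nonneg_left hub2r
          positivity
        have h6 : (1 / μ) * 7 ≤ 7 := by
          have : 1 / μ ≤ 1 := by
            rw [div_le_one hμ0]; linarith
          linarith
        nlinarith
      linarith
    · -- upper bound
      have h5 : μ * (T.dist a.1 b.1 : ℝ)
          ≤ μ * (3 * (k:ℝ) * ((QITAux.Tnew T htree.isConnected r f k).dist a b : ℝ)) :=
        mul_le_mul_of_nonneg_left hlbr (le_of_lt hμ0)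
      have h6 : μ * (3 * (k:ℝ) * ((QITAux.Tnew T htree.isConnected r f k).dist a b : ℝ))
          = 3 * (k:ℝ) * μ * ((QITAux.Tnew T htree.isConnected r f k).dist a b : ℝ) := by ring
      rw [h6] at h5
      linarith
  · intro x
    obtain ⟨v, hv⟩ := hcover x
    refine ⟨⟨QITAux.sig T r f v, QITAux.sig_idem T r f v⟩, ?_⟩
    have hfv : f (QITAux.sig T r f v) = f v := (QITAux.sig_spec T r f v).1
    show dist x (f (QITAux.sig T r f v)) ≤ α + 7
    rw [hfv]
    linarith
end
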